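/- arXiv:2504.19468 — 6 statements merged into one kernel-verified Lean document; each statement's English description precedes it below -/
import Mathlib

section
/- Let G = G₁ × G₂, where G₁ and G₂ are finitely generated groups, each with finitely many conjugacy classes, with generating sets S and T respectively, and equip G with the generating set S ⊔ T (each s ∈ S identified with (s,1) and each t ∈ T with (1,t)). If both G₁ and G₂ have an independent signature sequence, then G has an independent signature sequence. -/
/-- Words over the alphabet `ι` with prescribed signature `α`: the word `w` has signature `α`
if each letter `i` occurs exactly `α i` times in `w`. -/
def sigSet {ι : Type*} [DecidableEq ι] (α : ι → ℕ) : Set (List ι) :=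
  {w | ∀ i, w.count i = α i}

/-- The signature vector `V_α` of a signature `α`, with respect to a family of group elements
`s : ι → G` and an enumeration `C : Fin r → ConjClasses G` of (some) conjugacy classes: its
`j`-th entry is the number of words of signature `α` whose product lies in the class `C j`. -/
noncomputable def sigVec {ι G : Type*} [DecidableEq ι] [Group G] (s : ι → G) {r : ℕ}
    (C : Fin r → ConjClasses G) (α : ι → ℕ) : Fin r → ℚ :=
  fun j => ((sigSet α ∩ {w | (w.map s).prod ∈ (C j).carrier}).ncard : ℚ)

/-- The group `G`, with generating family `s : ι → G`, has an *independent signature sequence*: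
there are an enumeration `C₁, …, C_r` of all conjugacy classes of `G` and signatures
`α₁, …, α_r` whose signature vectors `V_{α₁}, …, V_{α_r}` are linearly independent. -/
def HasISS {ι G : Type*} [DecidableEq ι] [Group G] (s : ι → G) : Prop :=
  ∃ (r : ℕ) (C : Fin r → ConjClasses G) (α : Fin r → ι → ℕ),
    Function.Bijective C ∧ LinearIndependent ℚ (fun i => sigVec s C (α i))

/-- The group `G`, with generating family `s : ι → G`, has an independent signature sequence
whose independent signature matrix is lower triangular with respect to some ordering of the
conjugacy classes of `G`. -/
def HasISSLT {ι G : Type*} [DecidableEq ι] [Group G] (s : ι → G) : Prop :=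
  ∃ (r : ℕ) (C : Fin r → ConjClasses G) (α : Fin r → ι → ℕ),
    Function.Bijective C ∧ LinearIndependent ℚ (fun i => sigVec s C (α i)) ∧
    ∀ i j : Fin r, i < j → sigVec s C (α i) j = 0


set_option linter.unusedSectionVars false
set_option linter.unusedVariables false
attribute [-instance] Sum.instBEq

namespace ISSAux

/-! ### Splitting and merging words over a sum alphabet -/

variable {ι κ : Type} [DecidableEq ι] [DecidableEq κ]

def shape (w : List (ι ⊕ κ)) : List Bool := w.map Sum.isLeft
def wl (w : List (ι ⊕ κ)) : List ι := w.filterMap Sum.getLeft?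
def wr (w : List (ι ⊕ κ)) : List κ := w.filterMap Sum.getRight?

def merge : List Bool → List ι → List κ → List (ι ⊕ κ)
  | [], _, _ => []
  | true :: bs, i :: u, v => Sum.inl i :: merge bs u v
  | true :: _, [], _ => []
  | false :: bs, u, k :: v => Sum.inr k :: merge bs u v
  | false :: _, _, [] => []

lemma merge_split (w : List (ι ⊕ κ)) : merge (shape w) (wl w) (wr w) = w := by
  induction w with
  | nil => rfl
  | cons a w ih => cases a <;> simp [shape, wl, wr, merge] at ih ⊢ <;> exact ih

lemma split_merge (bs : List Bool) (u : List ι) (v : List κ)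
    (hu : bs.count true = u.length) (hv : bs.count false = v.length) :
    shape (merge bs u v) = bs ∧ wl (merge bs u v) = u ∧ wr (merge bs u v) = v := by
  induction bs generalizing u v with
  | nil =>
    simp only [List.count_nil] at hu hv
    cases u; cases v
    · exact ⟨rfl, rfl, rfl⟩
    · simp at hv
    · simp at hu
  | cons b bs ih =>
    cases b
    · rcases v with _ | ⟨k, v⟩
      · simp at hv
      · simp only [List.count_cons] at hu hv
        obtain ⟨h1, h2, h3⟩ := ih u v (by simpa using hu) (by simpa using hv)
        have hm : merge (false :: bs) u (k :: v) = Sum.inr k :: merge bs u v := rfl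
        refine ⟨?_, ?_, ?_⟩ <;> rw [hm]
        · show Sum.isLeft (Sum.inr k) :: shape (merge bs u v) = _; rw [h1]; rfl
        · show wl (merge bs u v) = u; exact h2
        · show k :: wr (merge bs u v) = _; rw [h3]
    · rcases u with _ | ⟨i, u⟩
      · simp at hu
      · simp only [List.count_cons] at hu hv
        obtain ⟨h1, h2, h3⟩ := ih u v (by simpa using hu) (by simpa using hv)
        have hm : merge (true :: bs) (i :: u) v = Sum.inl i :: merge bs u v := rfl
        refine ⟨?_, ?_, ?_⟩ <;> rw [hm]
        · show Sum.isLeft (Sum.inl i) :: shape (merge bs u v) = _; rw [h1]; rfl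
        · show i :: wl (merge bs u v) = _; rw [h2]
        · show wr (merge bs u v) = v; exact h3

lemma beq_inl_inl (i j : ι) : ((Sum.inl i : ι ⊕ κ) == Sum.inl j) = decide (i = j) := by
  show decide _ = _
  exact decide_eq_decide.mpr (by simp)
lemma beq_inr_inl (i : ι) (k : κ) : ((Sum.inr k : ι ⊕ κ) == Sum.inl i) = false := by
  show decide _ = _
  exact decide_eq_false (by simp)
lemma beq_inl_inr (i : ι) (k : κ) : ((Sum.inl i : ι ⊕ κ) == Sum.inr k) = false := by
  show decide _ = _
  exact decide_eq_false (by simp)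
lemma beq_inr_inr (k l : κ) : ((Sum.inr k : ι ⊕ κ) == Sum.inr l) = decide (k = l) := by
  show decide _ = _
  exact decide_eq_decide.mpr (by simp)

lemma count_inl (w : List (ι ⊕ κ)) (i : ι) : w.count (Sum.inl i) = (wl w).count i := by
  induction w with
  | nil => rfl
  | cons a w ih => cases a <;> simp [wl, List.count_cons, ih, beq_inl_inl, beq_inr_inl, List.filterMap_cons]

lemma count_inr (w : List (ι ⊕ κ)) (k : κ) : w.count (Sum.inr k) = (wr w).count k := by
  induction w with
  | nil => rfl
  | cons a w ih => cases a <;> simp [wr, List.count_cons, ih, beq_inr_inr, beq_inl_inr, List.filterMap_cons]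

lemma shape_count_true (w : List (ι ⊕ κ)) : (shape w).count true = (wl w).length := by
  induction w with
  | nil => rfl
  | cons a w ih => cases a <;> simp [shape, wl, List.count_cons, List.filterMap_cons] at ih ⊢ <;> simp [ih]

lemma shape_count_false (w : List (ι ⊕ κ)) : (shape w).count false = (wr w).length := by
  induction w with
  | nil => rfl
  | cons a w ih => cases a <;> simp [shape, wr, List.count_cons, List.filterMap_cons] at ih ⊢ <;> simp [ih]

lemma prod_eq {G₁ G₂ : Type} [Group G₁] [Group G₂] (s : ι → G₁) (t : κ → G₂)
    (w : List (ι ⊕ κ)) :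
    (w.map (Sum.elim (fun i => ((s i, 1) : G₁ × G₂)) (fun k => ((1, t k) : G₁ × G₂)))).prod
      = (((wl w).map s).prod, ((wr w).map t).prod) := by
  induction w with
  | nil => simp [wl, wr, Prod.ext_iff]
  | cons a w ih =>
    cases a <;> simp [wl, wr, List.prod_cons, ih, Prod.ext_iff, Prod.fst_mul, Prod.snd_mul, List.filterMap_cons]

lemma length_eq_sum {γ : Type} [DecidableEq γ] [Fintype γ] (u : List γ) :
    u.length = ∑ i : γ, u.count i := by
  induction u with
  | nil => simp
  | cons a u ih =>
    simp only [List.length_cons, List.count_cons, ih, Finset.sum_add_distrib]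
    have h : (∑ i : γ, if (a == i) = true then 1 else 0) = 1 := by
      rw [Finset.sum_eq_single a]
      · simp
      · intro b _ hb
        simp [beq_iff_eq, Ne.symm hb]
      · simp
    omega

/-- The set of "shapes" with `m` lefts and `n` rights. -/
def Shapes (m n : ℕ) : Type := {bs : List Bool // bs.count true = m ∧ bs.count false = n}

lemma bool_len (bs : List Bool) : bs.length = bs.count true + bs.count false := by
  induction bs with
  | nil => rfl
  | cons b bs ih =>
    cases b <;> simp only [List.length_cons, List.count_cons, ih] <;> simp <;> omega

instance (m n : ℕ) : Finite (Shapes m n) := by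
  have hlen : ∀ x : Shapes m n, x.1.length = m + n := by
    rintro ⟨bs, h1, h2⟩
    show bs.length = m + n
    rw [bool_len, h1, h2]
  haveI hfin : Finite {l : List Bool // l.length = m + n} :=
    Finite.of_fintype (List.Vector Bool (m + n))
  refine Finite.of_injective
    (fun x : Shapes m n => (Subtype.mk x.1 (hlen x) : List.Vector Bool (m + n))) ?_
  intro x y h
  have h2 := congrArg Subtype.val h
  exact Subtype.ext h2

instance (m n : ℕ) : Nonempty (Shapes m n) :=
  ⟨⟨List.replicate m true ++ List.replicate n false, by simp [List.count_replicate]⟩⟩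

lemma shapes_pos (m n : ℕ) : 0 < Nat.card (Shapes m n) := Nat.card_pos

section Conj
variable {G₁ G₂ : Type} [Group G₁] [Group G₂]

lemma isConj_prod {a b : G₁ × G₂} : IsConj a b ↔ IsConj a.1 b.1 ∧ IsConj a.2 b.2 := by
  simp only [isConj_iff]
  constructor
  · rintro ⟨c, rfl⟩
    exact ⟨⟨c.1, rfl⟩, ⟨c.2, rfl⟩⟩
  · rintro ⟨⟨c₁, h₁⟩, ⟨c₂, h₂⟩⟩
    exact ⟨(c₁, c₂), Prod.ext h₁ h₂⟩

def prodMk : ConjClasses G₁ → ConjClasses G₂ → ConjClasses (G₁ × G₂) :=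
  Quotient.map₂ Prod.mk fun _ _ ha _ _ hb => isConj_prod.mpr ⟨ha, hb⟩

lemma prodMk_bijective :
    Function.Bijective (fun p : ConjClasses G₁ × ConjClasses G₂ => prodMk p.1 p.2) := by
  constructor
  · rintro ⟨c, d⟩ ⟨c', d'⟩ h
    obtain ⟨a, rfl⟩ := Quotient.exists_rep c
    obtain ⟨b, rfl⟩ := Quotient.exists_rep d
    obtain ⟨a', rfl⟩ := Quotient.exists_rep c'
    obtain ⟨b', rfl⟩ := Quotient.exists_rep d'
    have h' : IsConj (a, b) (a', b') := Quotient.exact h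
    obtain ⟨h1, h2⟩ := isConj_prod.mp h'
    exact Prod.ext (Quotient.sound h1) (Quotient.sound h2)
  · intro c
    obtain ⟨a, rfl⟩ := Quotient.exists_rep c
    exact ⟨(⟦a.1⟧, ⟦a.2⟧), rfl⟩

lemma carrier_prodMk (c : ConjClasses G₁) (d : ConjClasses G₂) :
    (prodMk c d).carrier = c.carrier ×ˢ d.carrier := by
  obtain ⟨a, rfl⟩ := Quotient.exists_rep c
  obtain ⟨b, rfl⟩ := Quotient.exists_rep d
  ext x
  have h1 : prodMk ⟦a⟧ ⟦b⟧ = ConjClasses.mk (a, b) := rfl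
  rw [h1, Set.mem_prod]
  show x ∈ (ConjClasses.mk (a, b)).carrier ↔
    x.1 ∈ (ConjClasses.mk a).carrier ∧ x.2 ∈ (ConjClasses.mk b).carrier
  simp only [ConjClasses.mem_carrier_iff_mk_eq]
  simp only [← ConjClasses.quotient_mk_eq_mk]
  constructor
  · intro h
    obtain ⟨hc1, hc2⟩ := isConj_prod.mp (Quotient.exact h)
    exact ⟨Quotient.sound hc1, Quotient.sound hc2⟩
  · rintro ⟨ha', hb'⟩
    exact Quotient.sound (isConj_prod.mpr ⟨Quotient.exact ha', Quotient.exact hb'⟩)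

end Conj

section Count

variable {G₁ G₂ : Type} [Group G₁] [Group G₂] [Fintype ι] [Fintype κ]

lemma card_count (s : ι → G₁) (t : κ → G₂) (α : ι → ℕ) (β : κ → ℕ)
    (P₁ : Set G₁) (P₂ : Set G₂) :
    (sigSet (Sum.elim α β) ∩
      {w | (w.map (Sum.elim (fun i => ((s i, 1) : G₁ × G₂))
        (fun k => ((1, t k) : G₁ × G₂)))).prod ∈ P₁ ×ˢ P₂}).ncard
    = Nat.card (Shapes (∑ i, α i) (∑ k, β k)) *
      ((sigSet α ∩ {u | (u.map s).prod ∈ P₁}).ncard *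
       (sigSet β ∩ {v | (v.map t).prod ∈ P₂}).ncard) := by
  classical
  rw [← Nat.card_coe_set_eq, ← Nat.card_coe_set_eq, ← Nat.card_coe_set_eq,
    ← Nat.card_prod, ← Nat.card_prod]
  refine Nat.card_congr ?_
  have memL : ∀ w : List (ι ⊕ κ), w ∈ sigSet (Sum.elim α β) → wl w ∈ sigSet α :=
    fun w hw i => by rw [← count_inl]; exact hw (Sum.inl i)
  have memR : ∀ w : List (ι ⊕ κ), w ∈ sigSet (Sum.elim α β) → wr w ∈ sigSet β :=
    fun w hw k => by rw [← count_inr]; exact hw (Sum.inr k)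
  have lenL : ∀ u : List ι, u ∈ sigSet α → u.length = ∑ i, α i := by
    intro u hu
    rw [length_eq_sum]
    exact Finset.sum_congr rfl fun i _ => hu i
  have lenR : ∀ v : List κ, v ∈ sigSet β → v.length = ∑ k, β k := by
    intro v hv
    rw [length_eq_sum]
    exact Finset.sum_congr rfl fun k _ => hv k
  refine
    { toFun := fun w =>
        (⟨shape w.1, by rw [shape_count_true]; exact lenL _ (memL w.1 w.2.1),
          by rw [shape_count_false]; exact lenR _ (memR w.1 w.2.1)⟩,
         ⟨wl w.1, memL w.1 w.2.1, by
            have h := w.2.2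
            rw [Set.mem_setOf_eq, prod_eq s t] at h
            exact h.1⟩,
         ⟨wr w.1, memR w.1 w.2.1, by
            have h := w.2.2
            rw [Set.mem_setOf_eq, prod_eq s t] at h
            exact h.2⟩)
      invFun := fun x => ⟨merge x.1.1 x.2.1.1 x.2.2.1, ?_⟩
      left_inv := ?_
      right_inv := ?_ }
  · -- membership of merged word
    obtain ⟨⟨bs, hb1, hb2⟩, ⟨u, hu, hu2⟩, ⟨v, hv, hv2⟩⟩ := x
    obtain ⟨h1, h2, h3⟩ := split_merge bs u v
      (by rw [hb1]; exact (lenL u hu).symm) (by rw [hb2]; exact (lenR v hv).symm)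
    dsimp only
    constructor
    · intro x
      cases x with
      | inl i => rw [count_inl, h2]; exact hu i
      | inr k => rw [count_inr, h3]; exact hv k
    · show _ ∈ P₁ ×ˢ P₂
      rw [prod_eq s t, h2, h3]
      exact ⟨hu2, hv2⟩
  · rintro ⟨w, hw⟩
    exact Subtype.ext (merge_split w)
  · rintro ⟨⟨bs, hb1, hb2⟩, ⟨u, hu, hu2⟩, ⟨v, hv, hv2⟩⟩
    obtain ⟨h1, h2, h3⟩ := split_merge bs u v
      (by rw [hb1]; exact (lenL u hu).symm) (by rw [hb2]; exact (lenR v hv).symm)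
    exact Prod.ext (Subtype.ext h1) (Prod.ext (Subtype.ext h2) (Subtype.ext h3))

end Count

end ISSAux

open ISSAux in
/-- Let `G = G₁ × G₂` with `G₁, G₂` finitely generated groups having finitely many conjugacy
classes, with generating families `s : ι → G₁` and `t : κ → G₂`, and equip `G` with the
generating family indexed by `ι ⊕ κ` (with `s i` identified with `(s i, 1)` and `t k` with
`(1, t k)`).  If both `G₁` and `G₂` have an independent signature sequence, then so does `G`. -/
theorem hasISS_prod {ι κ G₁ G₂ : Type} [Fintype ι] [Fintype κ] [DecidableEq ι] [DecidableEq κ]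
    [Group G₁] [Group G₂] (s : ι → G₁) (t : κ → G₂)
    (hs : Subgroup.closure (Set.range s) = ⊤) (ht : Subgroup.closure (Set.range t) = ⊤)
    [Finite (ConjClasses G₁)] [Finite (ConjClasses G₂)]
    (h₁ : HasISS s) (h₂ : HasISS t) :
    HasISS (Sum.elim (fun i => ((s i, 1) : G₁ × G₂)) (fun k => ((1, t k) : G₁ × G₂))) := by
  classical
  obtain ⟨r₁, C₁, A, hC₁, hL₁⟩ := h₁
  obtain ⟨r₂, C₂, B, hC₂, hL₂⟩ := h₂
  set e := (finProdFinEquiv : Fin r₁ × Fin r₂ ≃ Fin (r₁ * r₂)) with he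
  set C' : Fin (r₁ * r₂) → ConjClasses (G₁ × G₂) :=
    fun p => prodMk (C₁ (e.symm p).1) (C₂ (e.symm p).2) with hC'
  set α' : Fin (r₁ * r₂) → (ι ⊕ κ) → ℕ :=
    fun p => Sum.elim (A (e.symm p).1) (B (e.symm p).2) with hα'
  refine ⟨r₁ * r₂, C', α', ?_, ?_⟩
  · have hcomp : C' = (fun q : ConjClasses G₁ × ConjClasses G₂ => prodMk q.1 q.2) ∘
        (Prod.map C₁ C₂) ∘ e.symm := rfl
    rw [hcomp]
    exact prodMk_bijective.comp ((hC₁.prodMap hC₂).comp e.symm.bijective)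
  · set M₁ : Matrix (Fin r₁) (Fin r₁) ℚ := Matrix.of fun i j => sigVec s C₁ (A i) j with hM₁
    set M₂ : Matrix (Fin r₂) (Fin r₂) ℚ := Matrix.of fun i j => sigVec t C₂ (B i) j with hM₂
    set D : Fin r₁ × Fin r₂ → ℚ :=
      fun p => (Nat.card (Shapes (∑ i, A p.1 i) (∑ k, B p.2 k)) : ℚ) with hD
    set N : Matrix (Fin (r₁ * r₂)) (Fin (r₁ * r₂)) ℚ :=
      (Matrix.diagonal D * Matrix.kroneckerMap (· * ·) M₁ M₂).submatrix e.symm e.symm with hN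
    have key : ∀ p q : Fin (r₁ * r₂),
        sigVec (Sum.elim (fun i => ((s i, 1) : G₁ × G₂)) (fun k => ((1, t k) : G₁ × G₂)))
          C' (α' p) q
          = D (e.symm p) *
            (sigVec s C₁ (A (e.symm p).1) (e.symm q).1 *
             sigVec t C₂ (B (e.symm p).2) (e.symm q).2) := by
      intro p q
      simp only [sigVec, hα']
      rw [show (C' q).carrier
          = (C₁ (e.symm q).1).carrier ×ˢ (C₂ (e.symm q).2).carrier from carrier_prodMk _ _]
      rw [card_count s t (A (e.symm p).1) (B (e.symm p).2)]
      push_cast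
      rfl
    have hU₁ : IsUnit M₁ := Matrix.linearIndependent_rows_iff_isUnit.mp hL₁
    have hU₂ : IsUnit M₂ := Matrix.linearIndependent_rows_iff_isUnit.mp hL₂
    have hdet : N.det ≠ 0 := by
      rw [hN, Matrix.det_submatrix_equiv_self, Matrix.det_mul, Matrix.det_diagonal,
        Matrix.det_kronecker]
      refine mul_ne_zero (Finset.prod_ne_zero_iff.mpr fun p _ => ?_)
        (mul_ne_zero (pow_ne_zero _ ?_) (pow_ne_zero _ ?_))
      · exact Nat.cast_ne_zero.mpr (shapes_pos _ _).ne'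
      · exact ((Matrix.isUnit_iff_isUnit_det M₁).mp hU₁).ne_zero
      · exact ((Matrix.isUnit_iff_isUnit_det M₂).mp hU₂).ne_zero
    have hUnitN : IsUnit N := (Matrix.isUnit_iff_isUnit_det N).mpr
      (isUnit_iff_ne_zero.mpr hdet)
    have hLIN : LinearIndependent ℚ (fun p => N p) :=
      Matrix.linearIndependent_rows_iff_isUnit.mpr hUnitN
    have hrows : (fun p => sigVec
        (Sum.elim (fun i => ((s i, 1) : G₁ × G₂)) (fun k => ((1, t k) : G₁ × G₂)))
        C' (α' p)) = fun p => N p := by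
      funext p q
      rw [key p q]
      simp only [hN, Matrix.submatrix_apply, Matrix.diagonal_mul, Matrix.kroneckerMap_apply,
        hM₁, hM₂, Matrix.of_apply]
    rw [hrows]
    exact hLIN
end

section
/- Let G = G₁ × G₂, where G₁ and G₂ are finitely generated groups, each with finitely many conjugacy classes, with generating sets S and T respectively, and equip G with the generating set S ⊔ T. If both G₁ and G₂ have an independent signature sequence whose independent signature matrix is lower triangular (with respect to some ordering of their conjugacy classes), then G has an independent signature sequence whose independent signature matrix is lower triangular with respect to some ordering of its conjugacy classes. -/
section Aux

/-! ### Finiteness of signature sets -/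

lemma aux_length_eq_sum_count {ι : Type*} [Fintype ι] [DecidableEq ι] (w : List ι) :
    w.length = ∑ i, w.count i := by
  induction w with
  | nil => simp
  | cons a w ih => simp [List.count_cons, Finset.sum_add_distrib, ih, add_comm]

lemma aux_sigSet_finite {ι : Type*} [Fintype ι] [DecidableEq ι] (α : ι → ℕ) :
    (sigSet α).Finite := by
  apply (List.finite_length_eq ι (∑ i, α i)).subset
  intro w hw
  simp only [Set.mem_setOf_eq, aux_length_eq_sum_count w]
  exact Finset.sum_congr rfl fun i _ => hw i

lemma aux_sigVec_eq_zero_iff {ι G : Type*} [Fintype ι] [DecidableEq ι] [Group G] (s : ι → G)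
    {r : ℕ} (C : Fin r → ConjClasses G) (α : ι → ℕ) (j : Fin r) :
    sigVec s C α j = 0 ↔
      ¬ (sigSet α ∩ {w | (w.map s).prod ∈ (C j).carrier}).Nonempty := by
  rw [sigVec, Nat.cast_eq_zero,
    Set.ncard_eq_zero ((aux_sigSet_finite α).inter_of_left _),
    ← Set.not_nonempty_iff_eq_empty]

/-! ### Conjugacy classes of a product -/

lemma aux_isConj_prod_iff {G₁ G₂ : Type*} [Group G₁] [Group G₂] {a c : G₁} {b d : G₂} :
    IsConj ((a, b) : G₁ × G₂) (c, d) ↔ IsConj a c ∧ IsConj b d := by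
  simp only [isConj_iff]
  constructor
  · rintro ⟨⟨g, h⟩, hg⟩
    rw [Prod.ext_iff] at hg
    exact ⟨⟨g, hg.1⟩, ⟨h, hg.2⟩⟩
  · rintro ⟨⟨g, hg⟩, ⟨h, hh⟩⟩
    exact ⟨(g, h), Prod.ext hg hh⟩

/-- The canonical map `ConjClasses G₁ × ConjClasses G₂ → ConjClasses (G₁ × G₂)`. -/
def conjProd {G₁ G₂ : Type*} [Group G₁] [Group G₂] :
    ConjClasses G₁ × ConjClasses G₂ → ConjClasses (G₁ × G₂) := fun p =>
  Quotient.liftOn₂ p.1 p.2 (fun a b => ConjClasses.mk (a, b)) fun _ _ _ _ hac hbd =>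
    ConjClasses.mk_eq_mk_iff_isConj.2 (aux_isConj_prod_iff.2 ⟨hac, hbd⟩)

lemma conjProd_mk {G₁ G₂ : Type*} [Group G₁] [Group G₂] (a : G₁) (b : G₂) :
    conjProd (ConjClasses.mk a, ConjClasses.mk b) = ConjClasses.mk (a, b) := rfl

lemma conjProd_bijective {G₁ G₂ : Type*} [Group G₁] [Group G₂] :
    Function.Bijective (conjProd (G₁ := G₁) (G₂ := G₂)) := by
  constructor
  · rintro ⟨c₁, c₂⟩ ⟨d₁, d₂⟩ h
    obtain ⟨a, rfl⟩ := ConjClasses.mk_surjective c₁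
    obtain ⟨b, rfl⟩ := ConjClasses.mk_surjective c₂
    obtain ⟨x, rfl⟩ := ConjClasses.mk_surjective d₁
    obtain ⟨y, rfl⟩ := ConjClasses.mk_surjective d₂
    rw [conjProd_mk, conjProd_mk, ConjClasses.mk_eq_mk_iff_isConj, aux_isConj_prod_iff] at h
    exact Prod.ext (ConjClasses.mk_eq_mk_iff_isConj.2 h.1) (ConjClasses.mk_eq_mk_iff_isConj.2 h.2)
  · intro c
    obtain ⟨⟨a, b⟩, rfl⟩ := ConjClasses.mk_surjective c
    exact ⟨(ConjClasses.mk a, ConjClasses.mk b), rfl⟩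

lemma mem_conjProd_iff {G₁ G₂ : Type*} [Group G₁] [Group G₂] {x : G₁} {y : G₂}
    {c : ConjClasses G₁} {d : ConjClasses G₂} :
    (x, y) ∈ (conjProd (c, d)).carrier ↔ x ∈ c.carrier ∧ y ∈ d.carrier := by
  obtain ⟨a, rfl⟩ := ConjClasses.mk_surjective c
  obtain ⟨b, rfl⟩ := ConjClasses.mk_surjective d
  rw [ConjClasses.mem_carrier_iff_mk_eq, ConjClasses.mem_carrier_iff_mk_eq,
    ConjClasses.mem_carrier_iff_mk_eq, conjProd_mk, ConjClasses.mk_eq_mk_iff_isConj,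
    aux_isConj_prod_iff, ← ConjClasses.mk_eq_mk_iff_isConj, ← ConjClasses.mk_eq_mk_iff_isConj]

/-! ### Words over a sum alphabet -/

lemma aux_count_filterMap_getLeft {ι κ : Type*} [DecidableEq ι] [S : BEq (ι ⊕ κ)]
    [L : LawfulBEq (ι ⊕ κ)] (w : List (ι ⊕ κ)) (i : ι) :
    (w.filterMap Sum.getLeft?).count i = w.count (Sum.inl i) := by
  induction w with
  | nil => rfl
  | cons a w ih => cases a <;> simp [List.count_cons, ih, beq_iff_eq, List.filterMap_cons]

lemma aux_count_filterMap_getRight {ι κ : Type*} [DecidableEq κ] [S : BEq (ι ⊕ κ)]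
    [L : LawfulBEq (ι ⊕ κ)] (w : List (ι ⊕ κ)) (k : κ) :
    (w.filterMap Sum.getRight?).count k = w.count (Sum.inr k) := by
  induction w with
  | nil => rfl
  | cons a w ih => cases a <;> simp [List.count_cons, ih, beq_iff_eq, List.filterMap_cons]

lemma aux_count_inl_append {ι κ : Type*} [DecidableEq ι] [S : BEq (ι ⊕ κ)] [L : LawfulBEq (ι ⊕ κ)]
    (u : List ι) (v : List κ) (i : ι) :
    ((u.map Sum.inl ++ v.map Sum.inr : List (ι ⊕ κ))).count (Sum.inl i) = u.count i := by
  rw [List.count_append]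
  have h1 : (u.map Sum.inl : List (ι ⊕ κ)).count (Sum.inl i) = u.count i := by
    induction u with
    | nil => rfl
    | cons a u ih => simp [List.count_cons, ih, beq_iff_eq]
  have h2 : (v.map Sum.inr : List (ι ⊕ κ)).count (Sum.inl i) = 0 := by
    induction v with
    | nil => rfl
    | cons a v ih => simp [List.count_cons, ih, beq_iff_eq]
  rw [h1, h2, add_zero]

lemma aux_count_inr_append {ι κ : Type*} [DecidableEq κ] [S : BEq (ι ⊕ κ)] [L : LawfulBEq (ι ⊕ κ)]
    (u : List ι) (v : List κ) (k : κ) :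
    ((u.map Sum.inl ++ v.map Sum.inr : List (ι ⊕ κ))).count (Sum.inr k) = v.count k := by
  rw [List.count_append]
  have h1 : (u.map Sum.inl : List (ι ⊕ κ)).count (Sum.inr k) = 0 := by
    induction u with
    | nil => rfl
    | cons a u ih => simp [List.count_cons, ih, beq_iff_eq]
  have h2 : (v.map Sum.inr : List (ι ⊕ κ)).count (Sum.inr k) = v.count k := by
    induction v with
    | nil => rfl
    | cons a v ih => simp [List.count_cons, ih, beq_iff_eq]
  rw [h1, h2, zero_add]

lemma aux_filterMap_getLeft_append {ι κ : Type*} (u : List ι) (v : List κ) :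
    ((u.map Sum.inl ++ v.map Sum.inr : List (ι ⊕ κ))).filterMap Sum.getLeft? = u := by
  rw [List.filterMap_append]
  have h1 : (u.map Sum.inl : List (ι ⊕ κ)).filterMap Sum.getLeft? = u := by
    induction u with
    | nil => rfl
    | cons a u ih => simpa using ih
  have h2 : (v.map Sum.inr : List (ι ⊕ κ)).filterMap Sum.getLeft? = [] := by
    induction v with
    | nil => rfl
    | cons a v ih => simpa using ih
  rw [h1, h2, List.append_nil]

lemma aux_filterMap_getRight_append {ι κ : Type*} (u : List ι) (v : List κ) :
    ((u.map Sum.inl ++ v.map Sum.inr : List (ι ⊕ κ))).filterMap Sum.getRight? = v := by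
  rw [List.filterMap_append]
  have h1 : (u.map Sum.inl : List (ι ⊕ κ)).filterMap Sum.getRight? = [] := by
    induction u with
    | nil => rfl
    | cons a u ih => simpa using ih
  have h2 : (v.map Sum.inr : List (ι ⊕ κ)).filterMap Sum.getRight? = v := by
    induction v with
    | nil => rfl
    | cons a v ih => simpa using ih
  rw [h1, h2, List.nil_append]

lemma aux_prod_map_elim {ι κ G₁ G₂ : Type*} [Group G₁] [Group G₂] (s : ι → G₁) (t : κ → G₂)
    (w : List (ι ⊕ κ)) :
    (w.map (Sum.elim (fun i => ((s i, 1) : G₁ × G₂)) (fun k => (1, t k)))).prod =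
      (((w.filterMap Sum.getLeft?).map s).prod, ((w.filterMap Sum.getRight?).map t).prod) := by
  induction w with
  | nil => rfl
  | cons a w ih => cases a <;> simp [ih, Prod.ext_iff, List.filterMap_cons]

/-- The key combinatorial equivalence: a word of signature `Sum.elim α β` with product in the
class `conjProd (c, d)` exists iff words of signatures `α`, `β` with products in `c`, `d`
respectively exist. -/
lemma aux_prod_inter_nonempty_iff {ι κ G₁ G₂ : Type} [DecidableEq ι] [DecidableEq κ]
    [Group G₁] [Group G₂] (s : ι → G₁) (t : κ → G₂) (α : ι → ℕ) (β : κ → ℕ)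
    (c : ConjClasses G₁) (d : ConjClasses G₂) :
    (sigSet (Sum.elim α β) ∩
      {w | (w.map (Sum.elim (fun i => ((s i, 1) : G₁ × G₂)) (fun k => (1, t k)))).prod ∈
        (conjProd (c, d)).carrier}).Nonempty ↔
      (sigSet α ∩ {u | (u.map s).prod ∈ c.carrier}).Nonempty ∧
      (sigSet β ∩ {v | (v.map t).prod ∈ d.carrier}).Nonempty := by
  constructor
  · rintro ⟨w, hw, hmem⟩
    rw [Set.mem_setOf_eq, aux_prod_map_elim, mem_conjProd_iff] at hmem
    refine ⟨⟨w.filterMap Sum.getLeft?, ?_, hmem.1⟩, ⟨w.filterMap Sum.getRight?, ?_, hmem.2⟩⟩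
    · intro i
      rw [aux_count_filterMap_getLeft (S := instBEqOfDecidableEq) (L := instLawfulBEq)]
      exact hw (Sum.inl i)
    · intro k
      rw [aux_count_filterMap_getRight (S := instBEqOfDecidableEq) (L := instLawfulBEq)]
      exact hw (Sum.inr k)
  · rintro ⟨⟨u, hu, humem⟩, ⟨v, hv, hvmem⟩⟩
    refine ⟨u.map Sum.inl ++ v.map Sum.inr, ?_, ?_⟩
    · rintro (i | k)
      · rw [aux_count_inl_append (S := instBEqOfDecidableEq) (L := instLawfulBEq)]; exact hu i
      · rw [aux_count_inr_append (S := instBEqOfDecidableEq) (L := instLawfulBEq)]; exact hv k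
    · rw [Set.mem_setOf_eq, aux_prod_map_elim, aux_filterMap_getLeft_append,
        aux_filterMap_getRight_append, mem_conjProd_iff]
      exact ⟨humem, hvmem⟩

/-! ### Linear algebra -/

lemma aux_diag_ne_zero {r : ℕ} {M : Matrix (Fin r) (Fin r) ℚ}
    (hli : LinearIndependent ℚ (fun i => M i))
    (htri : ∀ i j : Fin r, i < j → M i j = 0) (k : Fin r) : M k k ≠ 0 := by
  have hbt : M.BlockTriangular OrderDual.toDual := fun i j h => htri i j h
  have hdet : M.det ≠ 0 :=
    isUnit_iff_ne_zero.mp ((Matrix.isUnit_iff_isUnit_det M).mp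
      (Matrix.linearIndependent_rows_iff_isUnit.mp hli))
  rw [Matrix.det_of_lowerTriangular M hbt] at hdet
  exact Finset.prod_ne_zero_iff.mp hdet k (Finset.mem_univ k)

lemma aux_lex_of_lt {r₁ r₂ : ℕ} {p q : Fin r₁ × Fin r₂}
    (h : finProdFinEquiv p < finProdFinEquiv q) :
    p.1 < q.1 ∨ (p.1 = q.1 ∧ p.2 < q.2) := by
  have hp : ((finProdFinEquiv p : Fin (r₁ * r₂)) : ℕ) = p.2 + r₂ * p.1 := rfl
  have hq : ((finProdFinEquiv q : Fin (r₁ * r₂)) : ℕ) = q.2 + r₂ * q.1 := rfl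
  rw [Fin.lt_def, hp, hq] at h
  rcases lt_trichotomy (p.1 : ℕ) (q.1 : ℕ) with h' | h' | h'
  · exact Or.inl h'
  · right
    refine ⟨Fin.ext h', ?_⟩
    rw [h'] at h
    rw [Fin.lt_def]
    omega
  · exfalso
    have h2 : (p.2 : ℕ) < r₂ := p.2.2
    have h3 : (q.2 : ℕ) < r₂ := q.2.2
    have h4 : r₂ * ((q.1 : ℕ) + 1) ≤ r₂ * (p.1 : ℕ) :=
      Nat.mul_le_mul_left r₂ (Nat.succ_le_of_lt h')
    rw [Nat.mul_add, Nat.mul_one] at h4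
    omega

end Aux

/-- Let `G = G₁ × G₂` with `G₁, G₂` finitely generated groups having finitely many conjugacy
classes, with generating families `s : ι → G₁` and `t : κ → G₂`, and equip `G` with the
generating family indexed by `ι ⊕ κ`.  If both `G₁` and `G₂` have an independent signature
sequence with lower triangular independent signature matrix (with respect to some ordering of
their conjugacy classes), then so does `G`. -/
theorem hasISSLT_prod {ι κ G₁ G₂ : Type} [Fintype ι] [Fintype κ] [DecidableEq ι] [DecidableEq κ]
    [Group G₁] [Group G₂] (s : ι → G₁) (t : κ → G₂)
    (hs : Subgroup.closure (Set.range s) = ⊤) (ht : Subgroup.closure (Set.range t) = ⊤)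
    [Finite (ConjClasses G₁)] [Finite (ConjClasses G₂)]
    (h₁ : HasISSLT s) (h₂ : HasISSLT t) :
    HasISSLT (Sum.elim (fun i => ((s i, 1) : G₁ × G₂)) (fun k => ((1, t k) : G₁ × G₂))) := by
  obtain ⟨r₁, C₁, α₁, hC₁, hli₁, htri₁⟩ := h₁
  obtain ⟨r₂, C₂, α₂, hC₂, hli₂, htri₂⟩ := h₂
  set F : ι ⊕ κ → G₁ × G₂ :=
    Sum.elim (fun i => ((s i, 1) : G₁ × G₂)) (fun k => ((1, t k) : G₁ × G₂)) with hF
  set C : Fin (r₁ * r₂) → ConjClasses (G₁ × G₂) :=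
    fun m => conjProd (C₁ (finProdFinEquiv.symm m).1, C₂ (finProdFinEquiv.symm m).2) with hC
  set α : Fin (r₁ * r₂) → (ι ⊕ κ) → ℕ :=
    fun m => Sum.elim (α₁ (finProdFinEquiv.symm m).1) (α₂ (finProdFinEquiv.symm m).2) with hα
  have key : ∀ p q : Fin r₁ × Fin r₂,
      sigVec F C (α (finProdFinEquiv p)) (finProdFinEquiv q) ≠ 0 ↔
        sigVec s C₁ (α₁ p.1) q.1 ≠ 0 ∧ sigVec t C₂ (α₂ p.2) q.2 ≠ 0 := by
    intro p q
    rw [Ne, aux_sigVec_eq_zero_iff, not_not, Ne, aux_sigVec_eq_zero_iff, not_not, Ne,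
      aux_sigVec_eq_zero_iff, not_not]
    simp only [hC, hα, Equiv.symm_apply_apply]
    exact aux_prod_inter_nonempty_iff s t (α₁ p.1) (α₂ p.2) (C₁ q.1) (C₂ q.2)
  have htri : ∀ m m' : Fin (r₁ * r₂), m < m' → sigVec F C (α m) m' = 0 := by
    intro m m' hlt
    obtain ⟨p, rfl⟩ := finProdFinEquiv.surjective m
    obtain ⟨q, rfl⟩ := finProdFinEquiv.surjective m'
    by_contra h
    obtain ⟨h1, h2⟩ := (key p q).mp h
    rcases aux_lex_of_lt hlt with hc | ⟨hc, hc'⟩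
    · exact h1 (htri₁ _ _ hc)
    · rw [hc] at h1
      exact h2 (htri₂ _ _ hc')
  have hdiag : ∀ m : Fin (r₁ * r₂), sigVec F C (α m) m ≠ 0 := by
    intro m
    obtain ⟨p, rfl⟩ := finProdFinEquiv.surjective m
    exact (key p p).mpr ⟨aux_diag_ne_zero hli₁ htri₁ p.1, aux_diag_ne_zero hli₂ htri₂ p.2⟩
  have hli : LinearIndependent ℚ (fun m => sigVec F C (α m)) := by
    have hbt : (Matrix.of fun m => sigVec F C (α m)).BlockTriangular OrderDual.toDual :=
      fun i j h => htri i j h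
    have hdet : (Matrix.of fun m => sigVec F C (α m)).det ≠ 0 := by
      rw [Matrix.det_of_lowerTriangular _ hbt]
      exact Finset.prod_ne_zero_iff.mpr fun m _ => hdiag m
    exact Matrix.linearIndependent_rows_iff_isUnit.mpr
      ((Matrix.isUnit_iff_isUnit_det _).mpr (isUnit_iff_ne_zero.2 hdet))
  have hbij : Function.Bijective C :=
    conjProd_bijective.comp ((hC₁.prodMap hC₂).comp finProdFinEquiv.symm.bijective)
  exact ⟨r₁ * r₂, C, α, hbij, hli, htri⟩
end

section
/- Let α₁,…,α_m ∈ ℂⁿ with m ≥ n, where αᵢ = (a_{i,1},…,a_{i,n}), and set γ(αᵢ) = {j ∈ [n] : a_{i,j} ≠ 0}. Suppose (a) |γ(α₁)| = 1, (b) |⋃_{i=1}^{m} γ(αᵢ)| = n, and (c) for each k ∈ {2,…,m}, |γ(α_k) ∖ ⋃_{i=1}^{k-1} γ(αᵢ)| ≤ 1. Then there exists a subsequence α_{p₁},…,α_{pₙ} (p₁ < ⋯ < pₙ) such that (1) α_{p₁},…,α_{pₙ} are linearly independent, and (2) there is a permutation of the columns transforming the n×n matrix with rows α_{p₁},…,α_{pₙ}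 into a lower triangular matrix (necessarily with nonzero diagonal entries). -/
/-- Let `α₁, …, α_m ∈ ℂⁿ` with `m ≥ n` (and `m ≥ 1`), with `γ(αᵢ) = {j : αᵢⱼ ≠ 0}`.
If (a) `|γ(α₁)| = 1`, (b) `|⋃ᵢ γ(αᵢ)| = n`, and (c) for every `k ≥ 2`,
`|γ(α_k) ∖ ⋃_{i<k} γ(αᵢ)| ≤ 1`, then there is a subsequence `α_{p₁}, …, α_{pₙ}`
(`p₁ < ⋯ < pₙ`) which is linearly independent and such that, after a suitable permutation `σ`
of the columns, the `n × n` matrix with rows `α_{pᵢ}` becomes lower triangular, necessarily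
with nonzero diagonal entries. -/
theorem exists_lowerTriangular_subsequence {m n : ℕ} (hm : 0 < m) (hmn : n ≤ m)
    (a : Fin m → Fin n → ℂ)
    (h1 : {j | a ⟨0, hm⟩ j ≠ 0}.ncard = 1)
    (h2 : (⋃ i : Fin m, {j | a i j ≠ 0}).ncard = n)
    (h3 : ∀ k : Fin m, 0 < (k : ℕ) →
      ({j | a k j ≠ 0} \ ⋃ i : {i : Fin m // i < k}, {j | a i.1 j ≠ 0}).ncard ≤ 1) :
    ∃ p : Fin n → Fin m, StrictMono p ∧
      LinearIndependent ℂ (fun i => a (p i)) ∧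
      ∃ σ : Equiv.Perm (Fin n),
        (∀ i j : Fin n, i < j → a (p i) (σ j) = 0) ∧ (∀ i : Fin n, a (p i) (σ i) ≠ 0) := by
  classical
  -- Finset supports
  set g : ℕ → Finset (Fin n) :=
    fun k => if h : k < m then Finset.univ.filter (fun j => a ⟨k, h⟩ j ≠ 0) else ∅ with hgdef
  have hgmem : ∀ (k : ℕ) (hk : k < m) (j : Fin n), j ∈ g k ↔ a ⟨k, hk⟩ j ≠ 0 := by
    intro k hk j; simp [hgdef, hk]
  -- cumulative unions
  set U : ℕ → Finset (Fin n) := fun k => (Finset.range k).biUnion g with hUdef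
  have hUmem : ∀ (k : ℕ) (j : Fin n), j ∈ U k ↔ ∃ l, l < k ∧ j ∈ g l := by
    intro k j; simp [hUdef, Finset.mem_biUnion]
  have hUmono : Monotone U := fun k l hkl =>
    Finset.biUnion_subset_biUnion_of_subset_left _ (Finset.range_subset_range.2 hkl)
  have hUsucc : ∀ k, U (k + 1) = U k ∪ g k := by
    intro k
    simp only [hUdef, Finset.range_add_one, Finset.biUnion_insert]
    exact Finset.union_comm _ _
  -- translate h1
  have hU1 : (U 1).card = 1 := by
    have hU1g : U 1 = g 0 := by
      rw [hUsucc 0]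
      simp [hUdef]
    rw [hU1g]
    have : g 0 = {j | a ⟨0, hm⟩ j ≠ 0}.toFinset := by
      ext j; simp [hgmem 0 hm, Set.mem_toFinset]
    rw [this, ← Set.ncard_eq_toFinset_card', h1]
  -- translate h2
  have hUm : (U m).card = n := by
    have : U m = (⋃ i : Fin m, {j | a i j ≠ 0}).toFinset := by
      ext j
      simp only [Set.mem_toFinset, Set.mem_iUnion, Set.mem_setOf_eq, hUmem]
      constructor
      · rintro ⟨l, hl, hj⟩
        exact ⟨⟨l, hl⟩, (hgmem l hl j).1 hj⟩
      · rintro ⟨i, hi⟩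
        exact ⟨i.1, i.2, (hgmem i.1 i.2 j).2 (by simpa using hi)⟩
    rw [this, ← Set.ncard_eq_toFinset_card', h2]
  -- step bound
  have hstep : ∀ k, (U (k + 1)).card ≤ (U k).card + 1 := by
    intro k
    rcases Nat.eq_zero_or_pos k with rfl | hk0
    · simpa [hU1] using Nat.le_succ 0
    rcases lt_or_ge k m with hkm | hkm
    · have hsd : (g k \ U k).card ≤ 1 := by
        have hset : g k \ U k =
            ({j | a ⟨k, hkm⟩ j ≠ 0} \
              ⋃ i : {i : Fin m // i < ⟨k, hkm⟩}, {j | a i.1 j ≠ 0}).toFinset := by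
          ext j
          simp only [Set.mem_toFinset, Set.mem_diff, Set.mem_iUnion, Set.mem_setOf_eq,
            Finset.mem_sdiff, hgmem k hkm, hUmem]
          constructor
          · rintro ⟨hj, hnot⟩
            refine ⟨hj, ?_⟩
            rintro ⟨⟨i, hilt⟩, hi⟩
            exact hnot ⟨i.1, hilt, (hgmem i.1 i.2 j).2 hi⟩
          · rintro ⟨hj, hnot⟩
            refine ⟨hj, ?_⟩
            rintro ⟨l, hlk, hl⟩
            have hlm : l < m := hlk.trans hkm
            exact hnot ⟨⟨⟨l, hlm⟩, hlk⟩, (hgmem l hlm j).1 hl⟩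
        rw [hset, ← Set.ncard_eq_toFinset_card']
        exact h3 ⟨k, hkm⟩ hk0
      calc (U (k + 1)).card = (U k ∪ g k).card := by rw [hUsucc]
        _ = (U k ∪ (g k \ U k)).card := by rw [Finset.union_sdiff_self_eq_union]
        _ ≤ (U k).card + (g k \ U k).card := Finset.card_union_le _ _
        _ ≤ (U k).card + 1 := by omega
    · have : g k = ∅ := by simp [hgdef, Nat.not_lt.2 hkm]
      rw [hUsucc, this, Finset.union_empty]
      exact Nat.le_succ _
  -- existence of indices
  have hex : ∀ i : Fin n, ∃ k, (i : ℕ) + 1 ≤ (U (k + 1)).card := by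
    intro i
    refine ⟨m - 1, ?_⟩
    have hmm : m - 1 + 1 = m := by omega
    rw [hmm, hUm]
    exact i.2
  set pp : Fin n → ℕ := fun i => Nat.find (hex i) with hppdef
  have hspec : ∀ i : Fin n, (i : ℕ) + 1 ≤ (U (pp i + 1)).card := fun i => Nat.find_spec (hex i)
  have hpplt : ∀ i, pp i < m := by
    intro i
    have h1' : pp i ≤ m - 1 := Nat.find_min' (hex i) (by
      have hmm : m - 1 + 1 = m := by omega
      rw [hmm, hUm]; exact i.2)
    omega
  -- exact card values
  have hAB : ∀ i : Fin n, (U (pp i)).card = i ∧ (U (pp i + 1)).card = (i : ℕ) + 1 := by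
    intro i
    have hub : (U (pp i)).card ≤ (i : ℕ) := by
      rcases Nat.eq_zero_or_pos (pp i) with h0 | hpos
      · rw [h0]; simp [hUdef]
      · obtain ⟨k, hk⟩ := Nat.exists_eq_add_of_lt hpos
        have := Nat.find_min (hex i) (show k < pp i by omega)
        push_neg at this
        have hkk : k + 1 = pp i := by omega
        rw [← hkk]
        omega
    have hub2 : (U (pp i + 1)).card ≤ (i : ℕ) + 1 := (hstep (pp i)).trans (by omega)
    have hlb : (i : ℕ) ≤ (U (pp i)).card := by
      have := hstep (pp i)
      have := hspec i
      omega
    exact ⟨le_antisymm hub hlb, le_antisymm hub2 (hspec i)⟩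
  -- strict monotonicity of pp
  have hppmono : ∀ i j : Fin n, i < j → pp i < pp j := by
    intro i j hij
    by_contra h
    push_neg at h
    have := Finset.card_le_card (hUmono (by omega : pp j + 1 ≤ pp i + 1))
    have hi := (hAB i).2
    have hj := (hAB j).2
    omega
  -- new columns
  have hnew : ∀ i : Fin n, ∃ c : Fin n, c ∈ U (pp i + 1) ∧ c ∉ U (pp i) := by
    intro i
    by_contra h
    push_neg at h
    have hsub : U (pp i + 1) ⊆ U (pp i) := fun x hx => h x hx
    have := Finset.card_le_card hsub
    have hi1 := (hAB i).1
    have hi2 := (hAB i).2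
    omega
  choose c hc1 hc2 using hnew
  have hcg : ∀ i, c i ∈ g (pp i) := by
    intro i
    have := hc1 i
    rw [hUsucc] at this
    rcases Finset.mem_union.1 this with h | h
    · exact absurd h (hc2 i)
    · exact h
  -- p
  set p : Fin n → Fin m := fun i => ⟨pp i, hpplt i⟩ with hpdef
  have hpmono : StrictMono p := fun i j hij => hppmono i j hij
  -- key vanishing: for i < j, a (p i) (c j) = 0
  have hzero : ∀ i j : Fin n, i < j → a (p i) (c j) = 0 := by
    intro i j hij
    by_contra h
    have hmem : c j ∈ g (pp i) := (hgmem (pp i) (hpplt i) (c j)).2 h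
    have h1' : c j ∈ U (pp i + 1) := by
      rw [hUsucc]; exact Finset.mem_union_right _ hmem
    have h2' : c j ∈ U (pp j) := hUmono (hppmono i j hij) h1'
    exact hc2 j h2'
  have hdiag : ∀ i : Fin n, a (p i) (c i) ≠ 0 := fun i => (hgmem (pp i) (hpplt i) (c i)).1 (hcg i)
  -- injectivity of c
  have hcinj : Function.Injective c := by
    intro i j hij
    by_contra hne
    rcases lt_or_gt_of_ne (fun h : i = j => hne h) with h | h
    · have : c i ∈ U (pp j) := hUmono (hppmono i j h) (hc1 i)
      rw [hij] at this
      exact hc2 j this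
    · have : c j ∈ U (pp i) := hUmono (hppmono j i h) (hc1 j)
      rw [← hij] at this
      exact hc2 i this
  set σ : Equiv.Perm (Fin n) :=
    Equiv.ofBijective c (Finite.injective_iff_bijective.1 hcinj) with hσdef
  have hσapp : ∀ i, σ i = c i := fun i => rfl
  -- matrix and linear independence
  set M : Matrix (Fin n) (Fin n) ℂ := Matrix.of (fun i j => a (p i) (σ j)) with hMdef
  have hMtri : M.BlockTriangular OrderDual.toDual := by
    intro i j hlt
    have : i < j := hlt
    simpa [hMdef, hσapp] using hzero i j this
  have hdet : M.det ≠ 0 := by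
    rw [Matrix.det_of_lowerTriangular M hMtri]
    refine Finset.prod_ne_zero_iff.2 fun i _ => ?_
    simpa [hMdef, hσapp] using hdiag i
  have hN : (fun i => a (p i)) = fun i => (M.submatrix id σ.symm) i := by
    funext i
    funext j
    simp [hMdef, Matrix.submatrix_apply]
  have hli : LinearIndependent ℂ (fun i => a (p i)) := by
    rw [hN]
    refine Matrix.linearIndependent_rows_iff_isUnit.2 ?_
    change IsUnit (M.submatrix id σ.symm)
    rw [Matrix.isUnit_iff_isUnit_det, Matrix.det_permute' σ.symm M]
    refine (isUnit_iff_ne_zero).2 (mul_ne_zero ?_ hdet)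
    have hs : (Equiv.Perm.sign σ.symm : ℤ) ≠ 0 := by
      rcases Int.isUnit_iff.1 (Units.isUnit (Equiv.Perm.sign σ.symm)) with h | h <;> simp [h]
    exact_mod_cast hs
  exact ⟨p, hpmono, hli, σ, fun i j hij => by simpa [hσapp] using hzero i j hij,
    fun i => by simpa [hσapp] using hdiag i⟩
end

section
/- Let (W,S) be a finite Coxeter system. If every proper parabolic subgroup W_J (J ⊊ S) has an independent signature sequence with a lower triangular independent signature matrix (with respect to some ordering of the conjugacy classes of W_J), then W has a non-cuspidal signature sequence with a lower triangular non-cuspidal signature matrix (with respect to some ordering of the non-cuspidal conjugacy classes of W). -/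
/-- A conjugacy class `c` of a Coxeter group `W` with Coxeter system `cs` is *cuspidal* if it
does not meet any proper (standard) parabolic subgroup `W_J`, `J ⊊ S`. -/
def IsCuspidal {B W : Type*} [Group W] {M : CoxeterMatrix B}
    (cs : CoxeterSystem M W) (c : ConjClasses W) : Prop :=
  ∀ J : Set B, J ≠ Set.univ → ∀ g ∈ c.carrier, g ∉ Subgroup.closure (cs.simple '' J)

/-- The Coxeter group `W` has a *non-cuspidal signature sequence*: an enumeration
`Ncus₁, …, Ncus_p` of its non-cuspidal conjugacy classes and signatures `α₁, …, α_p` whose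
non-cuspidal signature vectors `NV(α₁), …, NV(α_p)` are linearly independent, and such that no
word of signature `αᵢ` has its product in a cuspidal class. -/
def HasNSS {B W : Type*} [DecidableEq B] [Group W] {M : CoxeterMatrix B}
    (cs : CoxeterSystem M W) : Prop :=
  ∃ (p : ℕ) (N : Fin p → ConjClasses W) (α : Fin p → B → ℕ),
    Function.Injective N ∧ (∀ i, ¬ IsCuspidal cs (N i)) ∧
    (∀ c : ConjClasses W, ¬ IsCuspidal cs c → ∃ i, N i = c) ∧
    LinearIndependent ℚ (fun i => sigVec cs.simple N (α i)) ∧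
    (∀ (i : Fin p) (c : ConjClasses W), IsCuspidal cs c →
      ∀ w : List B, w ∈ sigSet (α i) → (w.map cs.simple).prod ∉ c.carrier)

/-- As `HasNSS`, with moreover a lower triangular non-cuspidal signature matrix. -/
def HasNSSLT {B W : Type*} [DecidableEq B] [Group W] {M : CoxeterMatrix B}
    (cs : CoxeterSystem M W) : Prop :=
  ∃ (p : ℕ) (N : Fin p → ConjClasses W) (α : Fin p → B → ℕ),
    Function.Injective N ∧ (∀ i, ¬ IsCuspidal cs (N i)) ∧
    (∀ c : ConjClasses W, ¬ IsCuspidal cs c → ∃ i, N i = c) ∧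
    LinearIndependent ℚ (fun i => sigVec cs.simple N (α i)) ∧
    (∀ i j : Fin p, i < j → sigVec cs.simple N (α i) j = 0) ∧
    (∀ (i : Fin p) (c : ConjClasses W), IsCuspidal cs c →
      ∀ w : List B, w ∈ sigSet (α i) → (w.map cs.simple).prod ∉ c.carrier)

/-- The Coxeter group `W` has a *cuspidal signature sequence*: an enumeration
`Cus₁, …, Cus_q` of its cuspidal conjugacy classes and signatures `β₁, …, β_q` whose cuspidal
signature vectors `CV(β₁), …, CV(β_q)` are linearly independent. -/
def HasCSS {B W : Type*} [DecidableEq B] [Group W] {M : CoxeterMatrix B}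
    (cs : CoxeterSystem M W) : Prop :=
  ∃ (q : ℕ) (Cu : Fin q → ConjClasses W) (β : Fin q → B → ℕ),
    Function.Injective Cu ∧ (∀ j, IsCuspidal cs (Cu j)) ∧
    (∀ c : ConjClasses W, IsCuspidal cs c → ∃ j, Cu j = c) ∧
    LinearIndependent ℚ (fun j => sigVec cs.simple Cu (β j))

/-- As `HasCSS`, with moreover a lower triangular cuspidal signature matrix. -/
def HasCSSLT {B W : Type*} [DecidableEq B] [Group W] {M : CoxeterMatrix B}
    (cs : CoxeterSystem M W) : Prop :=
  ∃ (q : ℕ) (Cu : Fin q → ConjClasses W) (β : Fin q → B → ℕ),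
    Function.Injective Cu ∧ (∀ j, IsCuspidal cs (Cu j)) ∧
    (∀ c : ConjClasses W, IsCuspidal cs c → ∃ j, Cu j = c) ∧
    LinearIndependent ℚ (fun j => sigVec cs.simple Cu (β j)) ∧
    ∀ i j : Fin q, i < j → sigVec cs.simple Cu (β i) j = 0

/-- The canonical generating family of the standard parabolic subgroup `W_J`, indexed by `J`. -/
def parabolicGen {B W : Type*} [Group W] {M : CoxeterMatrix B} (cs : CoxeterSystem M W)
    (J : Finset B) : J → Subgroup.closure (cs.simple '' (J : Set B)) :=
  fun j => ⟨cs.simple j, Subgroup.subset_closure ⟨j.1, Finset.mem_coe.mpr j.2, rfl⟩⟩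

-- aux lemmas
lemma ltm_linearIndependent {p : ℕ} (v : Fin p → Fin p → ℚ)
    (hlt : ∀ i j : Fin p, i < j → v i j = 0) (hd : ∀ i, v i i ≠ 0) :
    LinearIndependent ℚ v := by
  have h : (Matrix.of v).BlockTriangular OrderDual.toDual := by
    intro i j hij
    exact hlt i j hij
  rw [show v = (Matrix.of v).row from rfl, Matrix.linearIndependent_rows_iff_isUnit,
    Matrix.isUnit_iff_isUnit_det, Matrix.det_of_lowerTriangular _ h]
  exact (Finset.prod_ne_zero_iff.mpr fun i _ => hd i).isUnit

lemma diag_ne_zero_of_linearIndependent {p : ℕ} (v : Fin p → Fin p → ℚ)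
    (hli : LinearIndependent ℚ v) (hlt : ∀ i j : Fin p, i < j → v i j = 0) (i : Fin p) :
    v i i ≠ 0 := by
  have h : (Matrix.of v).BlockTriangular OrderDual.toDual := fun i j hij => hlt i j hij
  rw [show v = (Matrix.of v).row from rfl, Matrix.linearIndependent_rows_iff_isUnit,
    Matrix.isUnit_iff_isUnit_det, Matrix.det_of_lowerTriangular _ h, isUnit_iff_ne_zero,
    Finset.prod_ne_zero_iff] at hli
  exact hli i (Finset.mem_univ i)

lemma sigSet_finite {ι : Type*} [DecidableEq ι] [Fintype ι] (α : ι → ℕ) :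
    (sigSet α).Finite := by
  apply (List.finite_length_eq ι (∑ i, α i)).subset
  intro w hw
  have h1 : ∑ i, w.count i = w.length := by
    rw [← List.sum_toFinset_count_eq_length]
    exact (Finset.sum_subset (Finset.subset_univ _)
      (fun x _ hx => List.count_eq_zero_of_not_mem (by simpa using hx))).symm
  simp only [Set.mem_setOf_eq, ← h1]
  exact Finset.sum_congr rfl fun i _ => hw i

def extSig {B : Type*} [DecidableEq B] (J : Finset B) (β : J → ℕ) : B → ℕ :=
  fun b => if h : b ∈ J then β ⟨b, h⟩ else 0

open scoped Classical in
lemma key_count {B G : Type} [DecidableEq B] [Fintype B] [Group G] (f : B → G)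
    (H : Subgroup G) (J : Finset B) (s : J → H) (hsf : ∀ j : J, (s j : G) = f j)
    {r : ℕ} (C : Fin r → ConjClasses H) (hC : Function.Bijective C) (β : J → ℕ)
    (c : ConjClasses G) :
    ((sigSet (extSig J β) ∩ {w | (w.map f).prod ∈ c.carrier}).ncard : ℚ)
      = ∑ t : Fin r, if ConjClasses.map H.subtype (C t) = c then sigVec s C β t else 0 := by
  have hprod : ∀ u : List J, ((u.map Subtype.val).map f).prod = ((u.map s).prod : G) := by
    intro u
    have h1 : (H.subtype ((u.map s).prod) : G) = ((u.map s).map H.subtype).prod :=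
      map_list_prod H.subtype _
    simp only [Subgroup.coe_subtype] at h1
    rw [h1, List.map_map, List.map_map]
    congr 1
    exact List.map_congr_left fun a _ => (hsf a).symm
  have hA : sigSet (extSig J β) ∩ {w | (w.map f).prod ∈ c.carrier}
      = (List.map (Subtype.val : J → B)) ''
        (sigSet β ∩ {u | ConjClasses.map H.subtype (ConjClasses.mk ((u.map s).prod)) = c}) := by
    ext w
    constructor
    · rintro ⟨hw1, hw2⟩
      have hwJ : ∀ b ∈ w, b ∈ J := by
        intro b hb
        by_contra hbJ
        have : w.count b = 0 := by rw [hw1 b]; simp [extSig, hbJ]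
        exact (List.count_eq_zero.mp this) hb
      set u : List J := w.attachWith (· ∈ J) hwJ with hu
      have hcnt : u.map Subtype.val = w := List.attachWith_map_subtype_val hwJ
      refine ⟨u, ⟨?_, ?_⟩, hcnt⟩
      · intro i
        have h2 : u.count i = w.count ↑i := List.count_attachWith hwJ
        refine (show @List.count J instBEqOfDecidableEq i u = @List.count J Subtype.instBEq i u by congr; ext x y; simp).trans (h2.trans ((hw1 ↑i).trans ?_))
        simp [extSig, i.2]
      · show ConjClasses.map H.subtype (ConjClasses.mk _) = c
        have hp := hprod u
        rw [hcnt] at hp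
        have h3 : ConjClasses.map H.subtype (ConjClasses.mk ((u.map s).prod))
            = ConjClasses.mk ((w.map f).prod) := by
          show ConjClasses.mk _ = _
          rw [hp]
          rfl
        rw [h3]
        exact ConjClasses.mem_carrier_iff_mk_eq.mp hw2
    · rintro ⟨u, ⟨hu1, hu2⟩, rfl⟩
      refine ⟨?_, ?_⟩
      · intro b
        by_cases hb : b ∈ J
        · have h2 := List.count_map_of_injective u (Subtype.val : J → B)
            Subtype.coe_injective ⟨b, hb⟩
          refine h2.trans ((show @List.count J Subtype.instBEq ⟨b, hb⟩ u = @List.count J instBEqOfDecidableEq ⟨b, hb⟩ u by congr; ext x y; simp).trans ((hu1 ⟨b, hb⟩).trans ?_))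
          simp [extSig, hb]
        · have h3 : b ∉ u.map Subtype.val := by
            intro hmem
            obtain ⟨a, _, ha2⟩ := List.mem_map.mp hmem
            exact hb (ha2 ▸ a.2)
          rw [List.count_eq_zero.mpr h3]
          simp [extSig, hb]
      · show ((u.map Subtype.val).map f).prod ∈ c.carrier
        rw [hprod u, ConjClasses.mem_carrier_iff_mk_eq]
        exact hu2
  rw [hA, Set.ncard_image_of_injective _ (List.map_injective_iff.mpr Subtype.coe_injective)]
  set Sfin : Finset (List J) := (sigSet_finite β).toFinset with hSfin
  set B' : Finset (List J) := Sfin.filter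
    (fun u => ConjClasses.map H.subtype (ConjClasses.mk ((u.map s).prod)) = c) with hB'
  have hset : sigSet β ∩ {u | ConjClasses.map H.subtype (ConjClasses.mk ((u.map s).prod)) = c}
      = ↑B' := by
    ext u
    simp [hB', hSfin, Set.Finite.mem_toFinset, Set.mem_setOf_eq]
  rw [hset, Set.ncard_coe_finset]
  let e : Fin r ≃ ConjClasses H := Equiv.ofBijective C hC
  have hcard : B'.card = ∑ t ∈ Finset.univ.filter
      (fun t : Fin r => ConjClasses.map H.subtype (C t) = c),
      (B'.filter (fun u => e.symm (ConjClasses.mk ((u.map s).prod)) = t)).card := by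
    apply Finset.card_eq_sum_card_fiberwise
    intro u hu
    simp only [Finset.mem_filter, Finset.mem_univ, true_and, Finset.coe_filter, Set.mem_setOf_eq]
    have h4 : C (e.symm (ConjClasses.mk ((u.map s).prod))) = ConjClasses.mk ((u.map s).prod) :=
      e.apply_symm_apply _
    rw [h4]
    exact (Finset.mem_filter.mp hu).2
  have hfib : ∀ t ∈ Finset.univ.filter
      (fun t : Fin r => ConjClasses.map H.subtype (C t) = c),
      ((B'.filter (fun u => e.symm (ConjClasses.mk ((u.map s).prod)) = t)).card : ℚ)
        = sigVec s C β t := by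
    intro t ht
    have htc : ConjClasses.map H.subtype (C t) = c := by simpa using ht
    have h5 : sigSet β ∩ {u | (u.map s).prod ∈ (C t).carrier}
        = ↑(B'.filter (fun u => e.symm (ConjClasses.mk ((u.map s).prod)) = t)) := by
      ext u
      simp only [Finset.coe_filter, Set.mem_setOf_eq, Set.mem_inter_iff, hB',
        Finset.mem_filter, hSfin, Set.Finite.mem_toFinset]
      constructor
      · rintro ⟨h1, h2⟩
        have hmk : ConjClasses.mk ((u.map s).prod) = C t :=
          ConjClasses.mem_carrier_iff_mk_eq.mp h2
        have h6 : e.symm (C t) = t := e.symm_apply_apply t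
        exact ⟨⟨h1, by rw [hmk]; exact htc⟩, by rw [hmk]; exact h6⟩
      · rintro ⟨⟨h1, _⟩, h3⟩
        have h7 : ConjClasses.mk ((u.map s).prod) = C t := by
          have h8 := congrArg e h3
          rwa [Equiv.apply_symm_apply] at h8
        exact ⟨h1, ConjClasses.mem_carrier_iff_mk_eq.mpr h7⟩
    rw [sigVec, h5, Set.ncard_coe_finset]
  rw [hcard]
  push_cast
  rw [Finset.sum_congr rfl hfib, Finset.sum_filter]

/-- Let `(W,S)` be a finite Coxeter system.  If every proper standard parabolic subgroup
`W_J` (`J ⊊ S`) has an independent signature sequence with a lower triangular independent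
signature matrix, then `W` has a non-cuspidal signature sequence with a lower triangular
non-cuspidal signature matrix. -/
theorem hasNSSLT_of_parabolic_hasISSLT {B W : Type} [DecidableEq B] [Fintype B]
    [Group W] [Finite W] {M : CoxeterMatrix B} (cs : CoxeterSystem M W)
    (h : ∀ J : Finset B, J ≠ Finset.univ → HasISSLT (parabolicGen cs J)) :
    HasNSSLT cs := by
  classical
  choose r C Al hbij hli hlt using
    fun (J : {J : Finset B // J ≠ Finset.univ}) => h J.1 J.2
  have hdiag : ∀ (J : {J : Finset B // J ≠ Finset.univ}) (t : Fin (r J)),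
      sigVec (parabolicGen cs J.1) (C J) (Al J t) t ≠ 0 :=
    fun J t => diag_ne_zero_of_linearIndependent _ (hli J) (hlt J) t
  -- pairs, fusion and keys
  let fus : (Σ J : {J : Finset B // J ≠ Finset.univ}, Fin (r J)) → ConjClasses W :=
    fun p => ConjClasses.map (Subgroup.closure (cs.simple '' (p.1.1 : Set B))).subtype (C p.1 p.2)
  let key : (Σ J : {J : Finset B // J ≠ Finset.univ}, Fin (r J)) → ℕ ×ₗ ℕ :=
    fun p => toLex (p.1.1.card, p.2.1)
  -- every non-cuspidal class is a fusion
  have happ : ∀ c : ConjClasses W, ¬ IsCuspidal cs c → ∃ p, fus p = c := by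
    intro c hc
    rw [IsCuspidal] at hc
    push_neg at hc
    obtain ⟨Js, hJne, g, hgc, hgH⟩ := hc
    have hfin : Js.Finite := Set.toFinite Js
    have hcoe : (hfin.toFinset : Set B) = Js := hfin.coe_toFinset
    have hJF : hfin.toFinset ≠ Finset.univ := by
      intro hu
      apply hJne
      rw [← hcoe, hu, Finset.coe_univ]
    rw [← hcoe] at hgH
    obtain ⟨t, ht⟩ := (hbij ⟨hfin.toFinset, hJF⟩).2
      (ConjClasses.mk (⟨g, hgH⟩ : Subgroup.closure (cs.simple '' ((hfin.toFinset : Finset B) : Set B))))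
    refine ⟨⟨⟨hfin.toFinset, hJF⟩, t⟩, ?_⟩
    show ConjClasses.map _ (C _ t) = c
    rw [ht]
    show ConjClasses.mk g = c
    exact ConjClasses.mem_carrier_iff_mk_eq.mp hgc
  -- minimal appearance
  have hmin : ∀ c : ConjClasses W, ¬ IsCuspidal cs c →
      ∃ p, fus p = c ∧ ∀ q, fus q = c → key p ≤ key q := by
    intro c hc
    obtain ⟨p, hp1, hp2⟩ := Set.exists_min_image {p | fus p = c} key (Set.toFinite _) (happ c hc)
    exact ⟨p, hp1, fun q hq => hp2 q hq⟩
  choose pc hpc1 hpc2 using hmin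
  let mkey : ConjClasses W → ℕ ×ₗ ℕ :=
    fun c => if hc : ¬ IsCuspidal cs c then key (pc c hc) else toLex (0, 0)
  -- the sorted list of non-cuspidal classes
  have hfinW : Finite (ConjClasses W) := Quotient.finite _
  let l₀ : List (ConjClasses W) := (Set.toFinite {c : ConjClasses W | ¬ IsCuspidal cs c}).toFinset.toList
  let l : List (ConjClasses W) := l₀.mergeSort (fun a b => decide (mkey a ≤ mkey b))
  have hperm : l.Perm l₀ := List.mergeSort_perm l₀ _
  have hnd : l.Nodup := hperm.nodup_iff.mpr (Finset.nodup_toList _)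
  have hmem : ∀ c, c ∈ l ↔ ¬ IsCuspidal cs c := by
    intro c
    rw [hperm.mem_iff]
    simp [l₀, Set.Finite.mem_toFinset]
  have hsorted : l.Pairwise (fun a b => mkey a ≤ mkey b) := by
    have hs := List.pairwise_mergeSort (le := fun a b => decide (mkey a ≤ mkey b))
      (fun a b c h1 h2 => by
        simp only [decide_eq_true_eq] at *
        exact le_trans h1 h2)
      (fun a b => by simpa using le_total (mkey a) (mkey b)) l₀
    exact hs.imp (fun hab => by simpa using hab)
  have hcus : ∀ i : Fin l.length, ¬ IsCuspidal cs (l.get i) :=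
    fun i => (hmem _).mp (l.get_mem i)
  have hinj : Function.Injective l.get := List.nodup_iff_injective_get.mp hnd
  have hmono : ∀ i j : Fin l.length, i < j → mkey (l.get i) ≤ mkey (l.get j) :=
    fun i j hij => List.pairwise_iff_get.mp hsorted i j hij
  -- the chosen pair and signature for each index
  let P : Fin l.length → (Σ J : {J : Finset B // J ≠ Finset.univ}, Fin (r J)) :=
    fun i => pc (l.get i) (hcus i)
  let A : Fin l.length → B → ℕ := fun i => extSig (P i).1.1 (Al (P i).1 (P i).2)
  have hmkey : ∀ i : Fin l.length, mkey (l.get i) = key (P i) := by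
    intro i
    show dite _ _ _ = _
    rw [dif_pos (hcus i)]
  -- the master formula
  have hform : ∀ i j : Fin l.length,
      sigVec cs.simple l.get (A i) j
        = ∑ t : Fin (r (P i).1),
            if ConjClasses.map (Subgroup.closure (cs.simple '' ((P i).1.1 : Set B))).subtype
                ((C (P i).1) t) = l.get j
            then sigVec (parabolicGen cs (P i).1.1) (C (P i).1) (Al (P i).1 (P i).2) t else 0 := by
    intro i j
    exact key_count cs.simple _ (P i).1.1 (parabolicGen cs (P i).1.1) (fun _ => rfl)
      (C (P i).1) (hbij (P i).1) (Al (P i).1 (P i).2) (l.get j)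
  -- lower triangularity
  have hLT : ∀ i j : Fin l.length, i < j → sigVec cs.simple l.get (A i) j = 0 := by
    intro i j hij
    rw [hform i j]
    apply Finset.sum_eq_zero
    intro t _
    split_ifs with hfus
    · rcases lt_trichotomy ((P i).2) t with hlt' | heq | hgt
      · exact hlt (P i).1 (P i).2 t hlt'
      · exfalso
        rw [← heq] at hfus
        have h1 : fus (P i) = l.get i := hpc1 (l.get i) (hcus i)
        have h2 : fus (P i) = l.get j := hfus
        exact absurd (hinj (h1.symm.trans h2)) (Fin.ne_of_lt hij)
      · exfalso
        have hq : fus ⟨(P i).1, t⟩ = l.get j := hfus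
        have h3 : key (P j) ≤ key ⟨(P i).1, t⟩ := hpc2 (l.get j) (hcus j) _ hq
        have h4 : mkey (l.get i) ≤ mkey (l.get j) := hmono i j hij
        rw [hmkey i, hmkey j] at h4
        have h5 : key (⟨(P i).1, t⟩ : Σ J : {J : Finset B // J ≠ Finset.univ}, Fin (r J))
            < key (P i) := by
          show toLex ((P i).1.1.card, t.1) < toLex ((P i).1.1.card, (P i).2.1)
          rw [Prod.Lex.lt_iff]
          exact Or.inr ⟨rfl, hgt⟩
        exact absurd (lt_of_le_of_lt (h4.trans h3) h5) (lt_irrefl _)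
    · rfl
  -- the diagonal is positive
  have hdpos : ∀ i : Fin l.length, sigVec cs.simple l.get (A i) i ≠ 0 := by
    intro i
    rw [hform i i]
    have hterm : ∀ t ∈ (Finset.univ : Finset (Fin (r (P i).1))),
        (0:ℚ) ≤ if ConjClasses.map (Subgroup.closure (cs.simple '' ((P i).1.1 : Set B))).subtype
                ((C (P i).1) t) = l.get i
            then sigVec (parabolicGen cs (P i).1.1) (C (P i).1) (Al (P i).1 (P i).2) t else 0 := by
      intro t _
      split_ifs
      · exact Nat.cast_nonneg _
      · exact le_refl 0
    have hthe : (0:ℚ) < if ConjClasses.map (Subgroup.closure (cs.simple '' ((P i).1.1 : Set B))).subtype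
                ((C (P i).1) ((P i).2)) = l.get i
            then sigVec (parabolicGen cs (P i).1.1) (C (P i).1) (Al (P i).1 (P i).2) (P i).2 else 0 := by
      rw [if_pos (hpc1 (l.get i) (hcus i))]
      exact lt_of_le_of_ne (Nat.cast_nonneg _) (Ne.symm (hdiag (P i).1 (P i).2))
    exact ne_of_gt (Finset.sum_pos' hterm ⟨(P i).2, Finset.mem_univ _, hthe⟩)
  refine ⟨l.length, l.get, A, hinj, hcus, ?_, ?_, hLT, ?_⟩
  · intro c hc
    exact List.mem_iff_get.mp ((hmem c).mpr hc)
  · exact ltm_linearIndependent _ hLT hdpos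
  · intro i c hc w hw hmemc
    have hwJ : ∀ b ∈ w, b ∈ (P i).1.1 := by
      intro b hb
      by_contra hbJ
      have : w.count b = 0 := by
        rw [hw b]
        simp [A, extSig, hbJ]
      exact (List.count_eq_zero.mp this) hb
    have hcl : (w.map cs.simple).prod ∈ Subgroup.closure (cs.simple '' (((P i).1.1 : Finset B) : Set B)) := by
      apply Subgroup.list_prod_mem
      intro x hx
      obtain ⟨b, hb, rfl⟩ := List.mem_map.mp hx
      exact Subgroup.subset_closure ⟨b, hwJ b hb, rfl⟩
    have hJne : (((P i).1.1 : Finset B) : Set B) ≠ Set.univ := by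
      intro hu
      apply (P i).1.2
      apply Finset.coe_injective
      rw [hu, Finset.coe_univ]
    exact hc (((P i).1.1 : Finset B) : Set B) hJne _ hmemc hcl
end

section
/- Let (W,S) be a finite Coxeter system and let Cus₁,…,Cus_q be all cuspidal conjugacy classes of W, ordered so that l(Cus₁) ≤ ⋯ ≤ l(Cus_q). Suppose that whenever l(Cus_k) = l(Cus_{k+1}) (there are finitely many such indices k, and all ties are between consecutive pairs only), there exists a word w_k ∈ φ⁻¹(Cus_k) with |w_k| = l(Cus_k) and E_{sig(w_k)} ∩ φ⁻¹(Cus_{k+1}) = ∅. Then W has a cuspidal signature sequence whose cuspidal signature matrix is lower triangular with respect to the ordering Cus₁,…,Cus_q. In particular, if l(Cusᵢ) ≠ l(Cus_j) for all i ≠ j, then W has a cuspidal signature sequence with a lower triangular cuspidal signature matrix. -/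
private lemma length_eq_sum_count' {ι : Type*} [Fintype ι] [DecidableEq ι] (l : List ι) :
    l.length = ∑ i, l.count i := by
  induction l with
  | nil => simp
  | cons a t ih =>
    simp only [List.length_cons, List.count_cons, ih, Finset.sum_add_distrib]
    simp



/-- The minimal Coxeter length `l(C)` of an element of the conjugacy class `C`. -/
noncomputable def conjClassLength {B W : Type*} [Group W] {M : CoxeterMatrix B}
    (cs : CoxeterSystem M W) (c : ConjClasses W) : ℕ :=
  sInf (cs.length '' c.carrier)

/-- Let `(W,S)` be a finite Coxeter system and `Cus₁, …, Cus_q` its cuspidal conjugacy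
classes, ordered so that `l(Cus₁) ≤ ⋯ ≤ l(Cus_q)`, where all ties of the lengths occur only
between consecutive pairs.  If for each `k` with `l(Cus_k) = l(Cus_{k+1})` there is a word
`w_k` with `φ(w_k) ∈ Cus_k`, `|w_k| = l(Cus_k)` and `E_{sig(w_k)} ∩ φ⁻¹(Cus_{k+1}) = ∅`,
then `W` has a cuspidal signature sequence whose cuspidal signature matrix is lower triangular
with respect to the ordering `Cus₁, …, Cus_q`. -/
theorem hasCSSLT_of_length_conditions {B W : Type} [DecidableEq B] [Fintype B]
    [Group W] [Finite W] {M : CoxeterMatrix B} (cs : CoxeterSystem M W)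
    (q : ℕ) (Cu : Fin q → ConjClasses W)
    (hinj : Function.Injective Cu) (hcusp : ∀ j, IsCuspidal cs (Cu j))
    (hall : ∀ c : ConjClasses W, IsCuspidal cs c → ∃ j, Cu j = c)
    (hmono : Monotone fun j => conjClassLength cs (Cu j))
    (hties : ∀ i j : Fin q, i < j →
      conjClassLength cs (Cu i) = conjClassLength cs (Cu j) → (j : ℕ) = (i : ℕ) + 1)
    (hwit : ∀ (k : Fin q) (hk : (k : ℕ) + 1 < q),
      conjClassLength cs (Cu k) = conjClassLength cs (Cu ⟨(k : ℕ) + 1, hk⟩) →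
      ∃ w : List B, (w.map cs.simple).prod ∈ (Cu k).carrier ∧
        w.length = conjClassLength cs (Cu k) ∧
        ∀ u : List B, (∀ i, u.count i = w.count i) →
          (u.map cs.simple).prod ∉ (Cu ⟨(k : ℕ) + 1, hk⟩).carrier) :
    ∃ β : Fin q → B → ℕ,
      LinearIndependent ℚ (fun j => sigVec cs.simple Cu (β j)) ∧
      ∀ i j : Fin q, i < j → sigVec cs.simple Cu (β i) j = 0 := by
  -- Step 1: choose a word for each class
  have hex : ∀ k : Fin q, ∃ w : List B,
      (w.map cs.simple).prod ∈ (Cu k).carrier ∧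
      w.length = conjClassLength cs (Cu k) ∧
      (∀ (hk : (k : ℕ) + 1 < q),
        conjClassLength cs (Cu k) = conjClassLength cs (Cu ⟨(k : ℕ) + 1, hk⟩) →
        ∀ u : List B, (∀ i, u.count i = w.count i) →
          (u.map cs.simple).prod ∉ (Cu ⟨(k : ℕ) + 1, hk⟩).carrier) := by
    intro k
    by_cases htie : ∃ hk : (k : ℕ) + 1 < q,
        conjClassLength cs (Cu k) = conjClassLength cs (Cu ⟨(k : ℕ) + 1, hk⟩)
    · obtain ⟨hk, htie⟩ := htie
      obtain ⟨w, h1, h2, h3⟩ := hwit k hk htie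
      exact ⟨w, h1, h2, fun _ _ => h3⟩
    · -- pick a minimal length element and a reduced word for it
      obtain ⟨g, hg⟩ := ConjClasses.exists_rep (Cu k)
      have hne : ((cs.length '' (Cu k).carrier) : Set ℕ).Nonempty :=
        ⟨cs.length g, Set.mem_image_of_mem _ (hg ▸ ConjClasses.mem_carrier_mk)⟩
      obtain ⟨x, hx, hxl⟩ := Nat.sInf_mem hne
      obtain ⟨ω, hω, rfl⟩ := cs.exists_reduced_word x
      refine ⟨ω, hx, by rw [← hω.eq]; exact hxl, fun hk h2 => absurd ⟨hk, h2⟩ htie⟩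
  choose w hw1 hw2 hw3 using hex
  -- any word with the same counts as `w k` has the same length
  have hlen : ∀ (k : Fin q) (u : List B), u ∈ sigSet (w k).count →
      u.length = conjClassLength cs (Cu k) := by
    intro k u hu
    rw [← hw2 k, length_eq_sum_count' u, length_eq_sum_count' (w k)]
    exact Finset.sum_congr rfl fun i _ => hu i
  -- off-diagonal zeros
  have hzero : ∀ i j : Fin q, i < j → sigVec cs.simple Cu ((w i).count) j = 0 := by
    intro i j hij
    have hempty : sigSet ((w i).count) ∩ {u | (u.map cs.simple).prod ∈ (Cu j).carrier}
        = (∅ : Set (List B)) := by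
      ext u
      simp only [Set.mem_inter_iff, Set.mem_setOf_eq, Set.mem_empty_iff_false, iff_false,
        not_and]
      intro hu hmem
      have hle : conjClassLength cs (Cu j) ≤ conjClassLength cs (Cu i) := by
        calc conjClassLength cs (Cu j) ≤ cs.length ((u.map cs.simple).prod) :=
              Nat.sInf_le (Set.mem_image_of_mem _ hmem)
          _ ≤ u.length := cs.length_wordProd_le u
          _ = conjClassLength cs (Cu i) := hlen i u hu
      have hge : conjClassLength cs (Cu i) ≤ conjClassLength cs (Cu j) := hmono hij.le
      have heq : conjClassLength cs (Cu i) = conjClassLength cs (Cu j) :=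
        le_antisymm hge hle
      have hj : (j : ℕ) = (i : ℕ) + 1 := hties i j hij heq
      have hk : (i : ℕ) + 1 < q := hj ▸ j.isLt
      have hjeq : j = ⟨(i : ℕ) + 1, hk⟩ := Fin.ext hj
      have := hw3 i hk (by rw [← hjeq]; exact heq) u (fun b => hu b)
      rw [← hjeq] at this
      exact this hmem
    simp [sigVec, hempty]
  -- diagonal entries are nonzero
  have hdiag : ∀ k : Fin q, sigVec cs.simple Cu ((w k).count) k ≠ 0 := by
    intro k
    have hfin : (sigSet ((w k).count) ∩
        {u | (u.map cs.simple).prod ∈ (Cu k).carrier}).Finite := by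
      apply (List.finite_length_eq (α := B) (n := conjClassLength cs (Cu k))).subset
      intro u hu
      exact hlen k u hu.1
    have hmem : w k ∈ sigSet ((w k).count) ∩
        {u | (u.map cs.simple).prod ∈ (Cu k).carrier} := ⟨fun i => rfl, hw1 k⟩
    have hpos : 0 < (sigSet ((w k).count) ∩
        {u | (u.map cs.simple).prod ∈ (Cu k).carrier}).ncard :=
      (Set.ncard_pos hfin).mpr ⟨w k, hmem⟩
    simp only [sigVec, ne_eq, Nat.cast_eq_zero]
    omega
  -- linear independence from lower triangularity
  have : LinearIndependent ℚ (fun i => (Matrix.of fun i j =>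
      sigVec cs.simple Cu ((w i).count) j) i) := by
    rw [← Matrix.row_def, Matrix.linearIndependent_rows_iff_isUnit]
    rw [Matrix.isUnit_iff_isUnit_det]
    have hBT : (Matrix.of fun i j =>
        sigVec cs.simple Cu ((w i).count) j).BlockTriangular OrderDual.toDual :=
      fun i j h => hzero i j h
    rw [Matrix.det_of_lowerTriangular _ hBT]
    exact isUnit_iff_ne_zero.mpr (Finset.prod_ne_zero_iff.mpr fun k _ => hdiag k)
  exact ⟨fun k => (w k).count, this, hzero⟩
end

section
/- Let Sₙ be the symmetric group on n letters with Coxeter generating set T = {(1,2),(2,3),…,(n−1,n)} (so Sₙ is the Coxeter group of type A_{n−1}). For a partition μ = (p₁,…,p_k) of n, let C^μ denote the conjugacy class of permutations of cycle type μ, and define the signature α(μ) = (1,…,1,0,1,…,1,0,…,0,1,…,1) ∈ ℕ^{n−1} consisting of blocks of p₁−1 ones, p₂−1 ones, …, p_k−1 ones, separated by single zeros. Then E_{α(μ)} ⊆ φ⁻¹(C^μ) and |E_{α(μ)}| = (n−k)!. Consequently, if μ₁,…,μ_r are all partitions of n with μ_j having k_j parts, then α(μ₁),…,α(μ_r) is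 an independent signature sequence of Sₙ whose independent signature matrix (with respect to the ordering C^{μ₁},…,C^{μ_r}) is the diagonal matrix diag((n−k₁)!,…,(n−k_r)!). -/
/-- The Coxeter generating set `T = {(1,2), (2,3), …, (n-1,n)}` of the symmetric group `Sₙ`. -/
def transposGen (n : ℕ) : Fin (n - 1) → Equiv.Perm (Fin n) :=
  fun i => Equiv.swap ⟨i.1, by have := i.2; omega⟩ ⟨i.1 + 1, by have := i.2; omega⟩

/-- The signature `α(μ)` attached to a partition `μ = (p₁ ≥ … ≥ p_k)` of `n`: it consists of
blocks of `p₁ - 1`, `p₂ - 1`, …, `p_k - 1` ones separated by single zeros.  Concretely, the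
`j`-th entry (`j` counted from `1`) is `0` exactly when `j` is one of the partial sums
`p₁, p₁ + p₂, …` of the parts, sorted in decreasing order. -/
def sigOfPartition (n : ℕ) (μ : n.Partition) : Fin (n - 1) → ℕ :=
  fun j =>
    if ((j : ℕ) + 1) ∈ ((μ.parts.sort (· ≤ ·)).reverse.scanl (· + ·) 0) then 0 else 1

/-- The conjugacy class `C^μ` of the symmetric group `Sₙ` consisting of the permutations of
cycle type `μ`, for `μ` a partition of `n` (in Mathlib, `Equiv.Perm.cycleType` records only
the parts of size at least `2`). -/
def cycleTypeClass (n : ℕ) (μ : n.Partition) : Set (Equiv.Perm (Fin n)) :=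
  {π | π.cycleType = μ.parts.filter (fun p => 2 ≤ p)}



namespace ISSAux

theorem swap_swap_shift {α : Type*} [DecidableEq α] (x y a : α) (hxy : x ≠ y) (hxa : x ≠ a) (hya : y ≠ a) :
    Equiv.swap x y * Equiv.swap x a = Equiv.swap x a * Equiv.swap a y := by
  ext z
  simp only [Equiv.Perm.mul_apply, Equiv.swap_apply_def]
  split_ifs <;> simp_all

theorem formPerm_merge {α : Type*} [DecidableEq α] (x y : α) (l₁ l₂ : List α)
    (h : (x :: (l₁ ++ y :: l₂)).Nodup) :
    Equiv.swap x y * (x :: l₁).formPerm * (y :: l₂).formPerm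
      = (x :: (l₁ ++ y :: l₂)).formPerm := by
  induction l₁ generalizing x with
  | nil =>
      simp [List.formPerm_singleton, List.formPerm_cons_cons]
  | cons a t ih =>
      have h' : (a :: (t ++ y :: l₂)).Nodup := h.of_cons
      have hxy : x ≠ y := by
        have := h.notMem; simp at this; tauto
      have hxa : x ≠ a := by
        have := h.notMem; simp at this; tauto
      have hya : y ≠ a := by
        have := h'.notMem; simp at this; tauto
      calc Equiv.swap x y * (x :: a :: t).formPerm * (y :: l₂).formPerm
          = (Equiv.swap x y * Equiv.swap x a) * ((a :: t).formPerm * (y :: l₂).formPerm) := by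
            rw [List.formPerm_cons_cons]; group
        _ = (Equiv.swap x a * Equiv.swap a y) * ((a :: t).formPerm * (y :: l₂).formPerm) := by
            rw [swap_swap_shift x y a hxy hxa hya]
        _ = Equiv.swap x a * (Equiv.swap a y * (a :: t).formPerm * (y :: l₂).formPerm) := by
            group
        _ = Equiv.swap x a * (a :: (t ++ y :: l₂)).formPerm := by rw [ih a h']
        _ = (x :: (a :: (t ++ y :: l₂))).formPerm := by rw [List.formPerm_cons_cons]
        _ = (x :: (a :: t ++ y :: l₂)).formPerm := rfl

theorem prod_split_commute {G ι : Type*} [Monoid G] (p : ι → Bool) :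
    ∀ (l : List ι) (f : ι → G),
      (∀ x ∈ l, ∀ y ∈ l, p x → ¬ p y → Commute (f x) (f y)) →
      (l.map f).prod
        = ((l.filter p).map f).prod * ((l.filter (fun x => ! p x)).map f).prod := by
  intro l
  induction l with
  | nil => simp
  | cons c t ih =>
      intro f hc
      have ht : ∀ x ∈ t, ∀ y ∈ t, p x → ¬ p y → Commute (f x) (f y) := by
        intro x hx y hy hpx hpy
        exact hc x (List.mem_cons_of_mem _ hx) y (List.mem_cons_of_mem _ hy) hpx hpy
      by_cases hp : p c
      · simp only [List.map_cons, List.prod_cons, List.filter_cons, hp]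
        rw [ih f ht]
        simp [mul_assoc]
      · have hcomm : Commute (f c) (((t.filter p).map f).prod) := by
          apply Commute.list_prod_right
          intro g hg
          simp only [List.mem_map, List.mem_filter] at hg
          obtain ⟨x, ⟨hx, hpx⟩, rfl⟩ := hg
          exact (hc x (List.mem_cons_of_mem _ hx) c (List.mem_cons_self) hpx hp).symm
        have hp' : p c = false := by simpa using hp
        simp only [List.map_cons, List.prod_cons, List.filter_cons, hp', Bool.not_false,
          if_true, if_false, Bool.false_eq_true]
        rw [ih f ht]
        rw [← mul_assoc, ← mul_assoc, hcomm.eq]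

theorem commute_swap_swap {α : Type*} [DecidableEq α] {a b c d : α}
    (h1 : a ≠ c) (h2 : a ≠ d) (h3 : b ≠ c) (h4 : b ≠ d) :
    Commute (Equiv.swap a b) (Equiv.swap c d) := by
  unfold Commute SemiconjBy
  ext z
  simp only [Equiv.Perm.mul_apply, Equiv.swap_apply_def]
  split_ifs <;> simp_all

theorem commute_transposGen {n : ℕ} (x y : Fin (n - 1)) (h : x.1 + 1 < y.1) :
    Commute (transposGen n x) (transposGen n y) := by
  apply commute_swap_swap <;> (intro he; have := congrArg Fin.val he; simp at this; omega)

theorem block_formPerm (n : ℕ) (hn : 1 ≤ n) :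
    ∀ (m a : ℕ) (w : List (Fin (n - 1))), a + m ≤ n - 1 → w.Nodup →
      (∀ x : Fin (n - 1), x ∈ w ↔ a ≤ x.1 ∧ x.1 < a + m) →
      ∃ l : List (Fin n), l.Nodup ∧ l.length = m + 1 ∧
        (∀ z : Fin n, z ∈ l ↔ a ≤ z.1 ∧ z.1 ≤ a + m) ∧
        (w.map (transposGen n)).prod = l.formPerm := by
  intro m
  induction m using Nat.strong_induction_on with
  | _ m IH =>
    intro a w hle hnd hmem
    match m, w with
    | 0, [] =>
        refine ⟨[⟨a, by omega⟩], by simp, by simp, ?_, by simp [List.formPerm_singleton]⟩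
        intro z
        simp only [List.mem_singleton, Fin.ext_iff]
        omega
    | 0, (i :: w') =>
        exfalso
        have := (hmem i).1 (List.mem_cons_self)
        omega
    | (m + 1), [] =>
        exfalso
        have ha : (⟨a, by omega⟩ : Fin (n - 1)) ∈ ([] : List (Fin (n-1))) := by
          rw [hmem]; simp
        simp at ha
    | (m + 1), (i :: w') =>
        have hi : a ≤ i.1 ∧ i.1 < a + (m + 1) := (hmem i).1 (List.mem_cons_self)
        have hnd' : w'.Nodup := hnd.of_cons
        have hinot : i ∉ w' := by have := hnd; simp at this; tauto
        have hmem' : ∀ x : Fin (n - 1), x ∈ w' ↔ a ≤ x.1 ∧ x.1 < a + (m + 1) ∧ x.1 ≠ i.1 := by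
          intro x
          constructor
          · intro hx
            have hb := (hmem x).1 (List.mem_cons_of_mem _ hx)
            refine ⟨hb.1, hb.2, ?_⟩
            intro he
            exact hinot (by rwa [show x = i from Fin.ext he] at hx)
          · rintro ⟨h1, h2, h3⟩
            have := (hmem x).2 ⟨h1, h2⟩
            rcases List.mem_cons.1 this with he | hx
            · exact absurd (congrArg Fin.val he) h3
            · exact hx
        set p : Fin (n - 1) → Bool := fun x => decide (x.1 < i.1) with hp
        -- split the product
        have hsplit : (w'.map (transposGen n)).prod
            = ((w'.filter p).map (transposGen n)).prod
              * ((w'.filter (fun x => ! p x)).map (transposGen n)).prod := by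
          apply prod_split_commute
          intro x hx y hy hpx hpy
          simp only [hp, decide_eq_true_eq] at hpx hpy
          have hyb := (hmem' y).1 hy
          apply commute_transposGen
          omega
        -- left block
        have hmemL : ∀ x : Fin (n - 1), x ∈ w'.filter p ↔ a ≤ x.1 ∧ x.1 < a + (i.1 - a) := by
          intro x
          rw [List.mem_filter, hmem']
          simp only [hp, decide_eq_true_eq]
          omega
        obtain ⟨l₁, hl₁nd, hl₁len, hl₁mem, hl₁prod⟩ :=
          IH (i.1 - a) (by omega) a (w'.filter p) (by omega) (hnd'.filter _) hmemL
        -- right block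
        have hmemR : ∀ x : Fin (n - 1), x ∈ w'.filter (fun x => ! p x) ↔
            i.1 + 1 ≤ x.1 ∧ x.1 < (i.1 + 1) + (a + m - i.1) := by
          intro x
          rw [List.mem_filter, hmem']
          simp only [hp, Bool.not_eq_true', decide_eq_false_iff_not, not_lt]
          omega
        obtain ⟨l₂, hl₂nd, hl₂len, hl₂mem, hl₂prod⟩ :=
          IH (a + m - i.1) (by omega) (i.1 + 1) (w'.filter (fun x => ! p x))
            (by omega) (hnd'.filter _) hmemR
        -- rotate l₁ to start at xi
        have hin : i.1 < n := by omega
        have hi1n : i.1 + 1 < n := by omega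
        set xi : Fin n := ⟨i.1, hin⟩ with hxi
        set yi : Fin n := ⟨i.1 + 1, hi1n⟩ with hyi
        have hxil : xi ∈ l₁ := by rw [hl₁mem]; simp [hxi]; omega
        obtain ⟨u, v, rfl⟩ := List.append_of_mem hxil
        have hrot1 : (xi :: (v ++ u)).formPerm = (u ++ xi :: v).formPerm := by
          have h0 : ((u ++ xi :: v).rotate u.length).formPerm = (u ++ xi :: v).formPerm :=
            List.formPerm_rotate _ hl₁nd _
          rw [List.rotate_append_length_eq] at h0
          simpa using h0
        have hl₁'nd : (xi :: (v ++ u)).Nodup := by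
          have : (u ++ xi :: v).rotate u.length = xi :: v ++ u := List.rotate_append_length_eq _ _
          have h2 := (List.rotate_perm (u ++ xi :: v) u.length).nodup_iff.mpr hl₁nd
          rw [this] at h2
          exact h2
        have hyil : yi ∈ l₂ := by rw [hl₂mem]; simp [hyi]; try omega
        obtain ⟨u₂, v₂, rfl⟩ := List.append_of_mem hyil
        have hrot2 : (yi :: (v₂ ++ u₂)).formPerm = (u₂ ++ yi :: v₂).formPerm := by
          have h0 : ((u₂ ++ yi :: v₂).rotate u₂.length).formPerm = (u₂ ++ yi :: v₂).formPerm :=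
            List.formPerm_rotate _ hl₂nd _
          rw [List.rotate_append_length_eq] at h0
          simpa using h0
        have hl₂'nd : (yi :: (v₂ ++ u₂)).Nodup := by
          have : (u₂ ++ yi :: v₂).rotate u₂.length = yi :: v₂ ++ u₂ :=
            List.rotate_append_length_eq _ _
          have h2 := (List.rotate_perm (u₂ ++ yi :: v₂) u₂.length).nodup_iff.mpr hl₂nd
          rw [this] at h2
          exact h2
        -- the combined list
        set L : List (Fin n) := (xi :: (v ++ u)) ++ (yi :: (v₂ ++ u₂)) with hL
        have hmemL1 : ∀ z : Fin n, z ∈ xi :: (v ++ u) ↔ a ≤ z.1 ∧ z.1 ≤ i.1 := by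
          intro z
          rw [show (z ∈ xi :: (v ++ u)) ↔ z ∈ u ++ xi :: v by simp; tauto, hl₁mem]
          omega
        have hmemL2 : ∀ z : Fin n, z ∈ yi :: (v₂ ++ u₂) ↔ i.1 + 1 ≤ z.1 ∧ z.1 ≤ a + (m + 1) := by
          intro z
          rw [show (z ∈ yi :: (v₂ ++ u₂)) ↔ z ∈ u₂ ++ yi :: v₂ by simp; tauto, hl₂mem]
          omega
        have hLnd : L.Nodup := by
          rw [hL, List.nodup_append]
          refine ⟨hl₁'nd, hl₂'nd, ?_⟩
          intro z hz1 z' hz2 hzz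
          subst hzz
          rw [hmemL1] at hz1
          rw [hmemL2] at hz2
          omega
        refine ⟨L, hLnd, ?_, ?_, ?_⟩
        · rw [hL]
          simp only [List.length_append, List.length_cons]
          have e1 : (u ++ xi :: v).length = i.1 - a + 1 := hl₁len
          have e2 : (u₂ ++ yi :: v₂).length = a + m - i.1 + 1 := hl₂len
          simp only [List.length_append, List.length_cons] at e1 e2
          omega
        · intro z
          rw [hL, List.mem_append, hmemL1, hmemL2]
          omega
        · rw [List.map_cons, List.prod_cons, hsplit, hl₁prod, hl₂prod, ← hrot1, ← hrot2]
          have hfi : transposGen n i = Equiv.swap xi yi := rfl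
          rw [hfi, ← mul_assoc]
          have := formPerm_merge xi yi (v ++ u) (v₂ ++ u₂) (by
            rw [show (xi :: ((v ++ u) ++ yi :: (v₂ ++ u₂))) = L from by simp [hL]]
            exact hLnd)
          rw [this]
          rfl

def inBlocks : List ℕ → ℕ → ℕ → Prop
  | [], _, _ => False
  | p :: q, a, t => (a ≤ t ∧ t + 1 < a + p) ∨ inBlocks q (a + p) t

instance inBlocks.decidable : ∀ (q : List ℕ) (a t : ℕ), Decidable (inBlocks q a t)
  | [], _, _ => .isFalse (fun h => h)
  | p :: q, a, t =>
      have : Decidable (inBlocks q (a + p) t) := inBlocks.decidable q (a + p) t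
      inferInstanceAs (Decidable (_ ∨ _))

theorem inBlocks_le {q : List ℕ} {a t : ℕ} (h : inBlocks q a t) : a ≤ t := by
  induction q generalizing a with
  | nil => exact absurd h (fun h => h)
  | cons p q ih =>
      rcases h with ⟨h1, _⟩ | h
      · exact h1
      · have := ih h; omega

theorem mem_scanl_self (b : ℕ) (q : List ℕ) : b ∈ List.scanl (· + ·) b q := by
  cases q <;> simp [List.scanl]

theorem le_of_mem_scanl : ∀ (q : List ℕ) (b x : ℕ), x ∈ List.scanl (· + ·) b q → b ≤ x := by
  intro q
  induction q with
  | nil => intro b x h; simp [List.scanl] at h; omega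
  | cons p q ih =>
      intro b x h
      rw [List.scanl_cons, List.mem_cons] at h
      rcases h with rfl | h
      · omega
      · have := ih (b + p) x h; omega

theorem scanl_cons' (b p : ℕ) (q : List ℕ) :
    List.scanl (· + ·) b (p :: q) = b :: List.scanl (· + ·) (b + p) q := by
  rw [List.scanl_cons]

theorem scanl_count : ∀ (q : List ℕ) (a : ℕ), (∀ p ∈ q, 1 ≤ p) → q ≠ [] →
    ((List.range' (a + 1) (q.sum - 1)).filter
        (fun t => decide (t ∈ List.scanl (· + ·) a q))).length = q.length - 1 := by
  intro q
  induction q with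
  | nil => intro a _ h; exact absurd rfl h
  | cons p q' ih =>
      intro a hpos _
      have hp1 : 1 ≤ p := hpos p (List.mem_cons_self)
      by_cases hq' : q' = []
      · subst hq'
        simp only [List.sum_cons, List.sum_nil, Nat.add_zero, List.length_cons,
          List.length_nil]
        rw [List.filter_eq_nil_iff.2]
        · simp
        · intro t ht
          rw [List.mem_range'_1] at ht
          rw [scanl_cons']
          simp only [List.scanl_nil, List.mem_cons, List.mem_singleton, decide_eq_true_eq,
            List.not_mem_nil, or_false]
          omega
      · obtain ⟨r, q'', rfl⟩ := List.exists_cons_of_ne_nil hq'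
        set Q : List ℕ := r :: q'' with hQ
        have hr1 : 1 ≤ r := hpos r (by simp [hQ])
        have hs1 : 1 ≤ Q.sum := by simp [hQ, List.sum_cons]; omega
        have hsum : (p :: Q).sum - 1 = (Q.sum - 1) + ((p - 1) + 1) := by
          simp [List.sum_cons]; omega
        rw [hsum]
        rw [show List.range' (a + 1) (Q.sum - 1 + (p - 1 + 1)) = List.range' (a + 1) (p - 1 + 1) ++ List.range' (a + 1 + (p - 1 + 1)) (Q.sum - 1) by rw [List.range'_append_1, Nat.add_comm (p - 1 + 1)]]
        have e2 : (p - 1) + 1 = 1 + (p - 1) := by omega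
        rw [e2, show List.range' (a + 1) (1 + (p - 1)) = List.range' (a + 1) (p - 1) ++ List.range' (a + 1 + (p - 1)) 1 by rw [List.range'_append_1, Nat.add_comm (p - 1) 1]]
        rw [List.filter_append, List.filter_append, List.length_append, List.length_append]
        have e0 : a + 1 + (p - 1) = a + p := by omega
        have e1 : a + 1 + (1 + (p - 1)) = a + p + 1 := by omega
        rw [e0, e1, List.range'_one]
        -- first chunk: nothing
        have c1 : ((List.range' (a + 1) (p - 1)).filter
            (fun t => decide (t ∈ List.scanl (· + ·) a (p :: Q)))).length = 0 := by
          rw [List.filter_eq_nil_iff.2]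
          · rfl
          · intro t ht
            rw [List.mem_range'_1] at ht
            rw [scanl_cons']
            simp only [List.mem_cons, decide_eq_true_eq]
            push_neg
            refine ⟨by omega, ?_⟩
            intro hmem
            have := le_of_mem_scanl Q (a + p) t hmem
            omega
        -- second chunk: exactly a + p
        have c2 : (([a + p]).filter
            (fun t => decide (t ∈ List.scanl (· + ·) a (p :: Q)))).length = 1 := by
          rw [scanl_cons']
          simp [mem_scanl_self]
        -- third chunk: IH
        have c3 : ((List.range' (a + p + 1) (Q.sum - 1)).filter
            (fun t => decide (t ∈ List.scanl (· + ·) a (p :: Q)))).length = Q.length - 1 := by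
          rw [List.filter_congr (q := fun t => decide (t ∈ List.scanl (· + ·) (a + p) Q))]
          · exact ih (a + p) (fun x hx => hpos x (List.mem_cons_of_mem _ hx)) (by simp [hQ])
          · intro t ht
            rw [List.mem_range'_1] at ht
            rw [scanl_cons']
            simp only [List.mem_cons, decide_eq_true_eq, decide_eq_decide]
            constructor
            · rintro (rfl | h)
              · omega
              · exact h
            · exact Or.inr
        rw [c1, c2, c3]
        simp only [hQ, List.length_cons]
        omega

theorem inBlocks_iff_scanl : ∀ (q : List ℕ) (a t : ℕ), (∀ p ∈ q, 1 ≤ p) →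
    (inBlocks q a t ↔ (a ≤ t ∧ t + 1 < a + q.sum ∧ t + 1 ∉ List.scanl (· + ·) a q)) := by
  intro q
  induction q with
  | nil =>
      intro a t _
      simp only [List.sum_nil, List.scanl_nil, List.mem_singleton]
      constructor
      · intro h; exact absurd h (fun h => h)
      · intro h; omega
  | cons p q' ih =>
      intro a t hpos
      have hp1 : 1 ≤ p := hpos p (List.mem_cons_self)
      rw [scanl_cons']
      constructor
      · intro h
        rcases h with ⟨h1, h2⟩ | h
        · refine ⟨h1, by simp [List.sum_cons]; omega, ?_⟩
          simp only [List.mem_cons]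
          push_neg
          refine ⟨by omega, ?_⟩
          intro hmem
          have := le_of_mem_scanl q' (a + p) (t + 1) hmem
          omega
        · obtain ⟨h1, h2, h3⟩ := (ih (a + p) t (fun x hx => hpos x (List.mem_cons_of_mem _ hx))).1 h
          refine ⟨by omega, by simp [List.sum_cons]; omega, ?_⟩
          simp only [List.mem_cons]
          push_neg
          exact ⟨by omega, h3⟩
      · rintro ⟨h1, h2, h3⟩
        simp only [List.mem_cons] at h3
        push_neg at h3
        by_cases hc : t + 1 < a + p
        · exact Or.inl ⟨h1, hc⟩
        · apply Or.inr
          have hne : t + 1 ≠ a + p := by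
            intro he
            exact h3.2 (he ▸ mem_scanl_self (a + p) q')
          apply (ih (a + p) t (fun x hx => hpos x (List.mem_cons_of_mem _ hx))).2
          refine ⟨by omega, by simp [List.sum_cons] at h2; omega, h3.2⟩

theorem blocks_cycleType (n : ℕ) (hn : 1 ≤ n) :
    ∀ (q : List ℕ) (a : ℕ) (w : List (Fin (n - 1))),
      (∀ p ∈ q, 1 ≤ p) → a + q.sum ≤ n → w.Nodup →
      (∀ x : Fin (n - 1), x ∈ w ↔ inBlocks q a x.1) →
      (w.map (transposGen n)).prod.cycleType = ↑(q.filter (fun p => 2 ≤ p))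
        ∧ ∀ z : Fin n, (w.map (transposGen n)).prod z ≠ z → a ≤ z.1 ∧ z.1 < a + q.sum := by
  intro q
  induction q with
  | nil =>
      intro a w _ _ _ hmem
      have hw : w = [] := by
        apply List.eq_nil_iff_forall_not_mem.2
        intro x hx
        exact (hmem x).1 hx
      subst hw
      simp [Equiv.Perm.cycleType_one]
  | cons p q ih =>
      intro a w hpos hsum hnd hmem
      have hp1 : 1 ≤ p := hpos p (List.mem_cons_self)
      set P : Fin (n - 1) → Bool := fun x => decide (x.1 + 1 < a + p) with hP
      have hsplit : (w.map (transposGen n)).prod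
          = ((w.filter P).map (transposGen n)).prod
            * ((w.filter (fun x => ! P x)).map (transposGen n)).prod := by
        apply prod_split_commute
        intro x hx y hy hpx hpy
        simp only [hP, decide_eq_true_eq] at hpx hpy
        have hyB : inBlocks (p :: q) a y.1 := (hmem y).1 hy
        have hyb : a + p ≤ y.1 := by
          rcases hyB with h1 | h2
          · omega
          · exact inBlocks_le h2
        exact commute_transposGen _ _ (by omega)
      -- left block
      have hmemL : ∀ x : Fin (n - 1), x ∈ w.filter P ↔ a ≤ x.1 ∧ x.1 < a + (p - 1) := by
        intro x
        rw [List.mem_filter, hmem]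
        simp only [hP, decide_eq_true_eq]
        constructor
        · rintro ⟨h1 | h2, hlt⟩
          · omega
          · have := inBlocks_le h2; omega
        · intro h
          exact ⟨Or.inl (by omega), by omega⟩
      obtain ⟨l, hlnd, hllen, hlmem, hlprod⟩ :=
        block_formPerm n hn (p - 1) a (w.filter P) (by simp only [List.sum_cons] at hsum; omega) (hnd.filter _) hmemL
      -- right part
      have hmemR : ∀ x : Fin (n - 1), x ∈ w.filter (fun x => ! P x) ↔ inBlocks q (a + p) x.1 := by
        intro x
        rw [List.mem_filter, hmem]
        simp only [hP, Bool.not_eq_true', decide_eq_false_iff_not, not_lt]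
        constructor
        · rintro ⟨h1 | h2, hge⟩
          · omega
          · exact h2
        · intro h
          have := inBlocks_le h
          exact ⟨Or.inr h, by omega⟩
      obtain ⟨ihct, ihsupp⟩ := ih (a + p) (w.filter (fun x => ! P x))
        (fun r hr => hpos r (List.mem_cons_of_mem _ hr)) (by simp only [List.sum_cons] at hsum; omega) (hnd.filter _) hmemR
      -- left moved points are ≤ a + p - 1
      have hlmoved : ∀ z : Fin n, l.formPerm z ≠ z → a ≤ z.1 ∧ z.1 ≤ a + (p - 1) := by
        intro z hz
        have : z ∈ l.toFinset := List.support_formPerm_le' l hz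
        rw [List.mem_toFinset] at this
        exact (hlmem z).1 this
      -- disjointness
      have hdisj : Equiv.Perm.Disjoint (l.formPerm)
          ((w.filter (fun x => ! P x)).map (transposGen n)).prod := by
        intro z
        by_contra hcon
        push_neg at hcon
        obtain ⟨h1, h2⟩ := hcon
        have hb1 := hlmoved z h1
        have hb2 := ihsupp z h2
        omega
      have hctL : (l.formPerm).cycleType = ↑(List.filter (fun r => decide (2 ≤ r)) [p]) := by
        by_cases hp2 : 2 ≤ p
        · have hl2 : 2 ≤ l.length := by omega
          have hcyc : l.formPerm.IsCycle :=
            List.isCycle_formPerm hlnd hl2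
          rw [hcyc.cycleType]
          have hsupp : l.formPerm.support = l.toFinset := by
            apply List.support_formPerm_of_nodup l hlnd
            intro x hx
            rw [hx] at hllen
            simp at hllen
            omega
          rw [hsupp, List.card_toFinset, List.dedup_eq_self.2 hlnd, hllen]
          have : p - 1 + 1 = p := by omega
          rw [this]
          simp [List.filter_cons, hp2]
        · have hp1' : p = 1 := by omega
          have : l.length = 1 := by omega
          obtain ⟨x, rfl⟩ := List.length_eq_one_iff.1 this
          rw [List.formPerm_singleton]
          simp [Equiv.Perm.cycleType_one, List.filter_cons, hp1']
      constructor
      · rw [hsplit, hlprod, hdisj.cycleType_mul, hctL, ihct]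
        rw [show (p :: q).filter (fun r => decide (2 ≤ r))
              = [p].filter (fun r => decide (2 ≤ r)) ++ q.filter (fun r => decide (2 ≤ r)) by
            rw [← List.filter_append]; rfl]
        simp
      · intro z hz
        rw [hsplit, hlprod] at hz
        have : l.formPerm z ≠ z ∨ ((w.filter (fun x => ! P x)).map (transposGen n)).prod z ≠ z := by
          by_contra hcon
          push_neg at hcon
          apply hz
          rw [Equiv.Perm.mul_apply, hcon.2, hcon.1]
        rcases this with h | h
        · have := hlmoved z h
          have : a + (p-1) < a + (p :: q).sum := by simp [List.sum_cons]; omega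
          simp [List.sum_cons]
          omega
        · have := ihsupp z h
          simp [List.sum_cons]
          omega

section
variable (n : ℕ) (μ : n.Partition)

-- basic facts about q
theorem q_pos : ∀ p ∈ (μ.parts.sort (· ≤ ·)).reverse, 1 ≤ p := by
  intro p hp
  rw [List.mem_reverse, Multiset.mem_sort] at hp
  exact μ.parts_pos hp

theorem q_sum : ((μ.parts.sort (· ≤ ·)).reverse).sum = n := by
  rw [List.sum_reverse]
  have : ((μ.parts.sort (· ≤ ·) : List ℕ) : Multiset ℕ) = μ.parts := Multiset.sort_eq _ _
  calc (μ.parts.sort (· ≤ ·)).sum = (((μ.parts.sort (· ≤ ·) : List ℕ) : Multiset ℕ)).sum := by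
        rw [Multiset.sum_coe]
    _ = μ.parts.sum := by rw [this]
    _ = n := μ.parts_sum

theorem q_len : ((μ.parts.sort (· ≤ ·)).reverse).length = Multiset.card μ.parts := by
  rw [List.length_reverse, Multiset.length_sort]

theorem q_coe : (((μ.parts.sort (· ≤ ·)).reverse : List ℕ) : Multiset ℕ) = μ.parts := by
  rw [Multiset.coe_reverse, Multiset.sort_eq]

theorem sig_one_iff (hn : 1 ≤ n) (x : Fin (n - 1)) :
    sigOfPartition n μ x = 1 ↔ inBlocks ((μ.parts.sort (· ≤ ·)).reverse) 0 x.1 := by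
  set q := (μ.parts.sort (· ≤ ·)).reverse with hq
  rw [inBlocks_iff_scanl q 0 x.1 (q_pos n μ)]
  have hx : x.1 < n - 1 := x.2
  have hs : q.sum = n := q_sum n μ
  unfold sigOfPartition
  by_cases hmem : (x.1 + 1) ∈ List.scanl (· + ·) 0 q
  · rw [if_pos hmem]
    constructor
    · intro h; omega
    · rintro ⟨_, _, h3⟩; exact absurd hmem h3
  · rw [if_neg hmem]
    constructor
    · intro _; exact ⟨Nat.zero_le _, by omega, hmem⟩
    · intro _; rfl

theorem sig_le_one (x : Fin (n - 1)) : sigOfPartition n μ x ≤ 1 := by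
  unfold sigOfPartition
  split <;> omega

theorem part1 (hn : 1 ≤ n) (w : List (Fin (n - 1)))
    (hw : ∀ k, w.count k = sigOfPartition n μ k) :
    (w.map (transposGen n)).prod ∈ cycleTypeClass n μ := by
  set q := (μ.parts.sort (· ≤ ·)).reverse with hq
  have hnd : w.Nodup := by
    rw [List.nodup_iff_count_le_one]
    intro x
    rw [hw x]
    exact sig_le_one n μ x
  have hmem : ∀ x : Fin (n - 1), x ∈ w ↔ inBlocks q 0 x.1 := by
    intro x
    rw [← sig_one_iff n μ hn x]
    constructor
    · intro hx
      have h1 := List.count_pos_iff.2 hx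
      have h2 := sig_le_one n μ x
      rw [hw x] at h1
      omega
    · intro hx
      apply List.count_pos_iff.1
      rw [hw x, hx]
      omega
  obtain ⟨hct, _⟩ := blocks_cycleType n hn q 0 w (q_pos n μ) (by rw [q_sum n μ]; omega) hnd hmem
  show (w.map (transposGen n)).prod.cycleType = μ.parts.filter (fun p => 2 ≤ p)
  rw [hct, ← Multiset.filter_coe (fun p => 2 ≤ p), q_coe]

end

theorem part2 (n : ℕ) (hn : 1 ≤ n) (μ : n.Partition) :
    {w : List (Fin (n - 1)) | ∀ k, w.count k = sigOfPartition n μ k}.ncard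
      = Nat.factorial (n - Multiset.card μ.parts) := by
  classical
  set q : List ℕ := (μ.parts.sort (· ≤ ·)).reverse with hq
  set P : List ℕ := List.scanl (· + ·) 0 q with hP
  set L₀ : List (Fin (n - 1)) :=
    (List.finRange (n - 1)).filter (fun j => !decide ((j.1 + 1) ∈ P)) with hL₀
  have hL₀nd : L₀.Nodup := (List.nodup_finRange _).filter _
  have hmemL₀ : ∀ a : Fin (n - 1), a ∈ L₀ ↔ sigOfPartition n μ a = 1 := by
    intro a
    rw [hL₀, List.mem_filter]
    unfold sigOfPartition
    constructor
    · rintro ⟨-, h⟩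
      simp only [Bool.not_eq_true', decide_eq_false_iff_not] at h
      rw [if_neg h]
    · intro h
      refine ⟨List.mem_finRange a, ?_⟩
      simp only [Bool.not_eq_true', decide_eq_false_iff_not]
      intro hmem
      rw [if_pos hmem] at h
      omega
  have hcountL₀ : ∀ a : Fin (n - 1), L₀.count a = sigOfPartition n μ a := by
    intro a
    by_cases ha : a ∈ L₀
    · rw [List.count_eq_one_of_mem hL₀nd ha, ((hmemL₀ a).1 ha)]
    · rw [List.count_eq_zero.2 ha]
      have := sig_le_one n μ a
      have h2 := (hmemL₀ a).not
      rw [h2] at ha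
      omega
  have hset : {w : List (Fin (n - 1)) | ∀ k, w.count k = sigOfPartition n μ k}
      = ↑(L₀.permutations.toFinset) := by
    ext w
    simp only [Set.mem_setOf_eq, Finset.coe_sort_coe, Finset.mem_coe, List.mem_toFinset,
      List.mem_permutations]
    rw [List.perm_iff_count]
    constructor
    · intro h k; rw [h k, hcountL₀ k]
    · intro h k; rw [h k, hcountL₀ k]
  rw [hset, Set.ncard_coe_finset,
    List.toFinset_card_of_nodup (List.nodup_permutations _ hL₀nd),
    List.length_permutations]
  congr 1
  -- length of L₀
  have hqs : q.sum = n := q_sum n μ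
  have hqlen : q.length = Multiset.card μ.parts := q_len n μ
  have hqne : q ≠ [] := by
    intro h; rw [h] at hqs; simp at hqs; omega
  have hql : 1 ≤ q.length := by
    have := List.length_pos_iff.2 hqne
    omega
  have hfin : L₀.length = ((List.range (n - 1)).filter
      (fun t => !decide ((t + 1) ∈ P))).length := by
    rw [← (show (List.finRange (n - 1)).map Fin.val = List.range (n - 1) from List.ext_getElem (by simp) (by simp)), List.filter_map, List.length_map]
    rw [hL₀]
    congr 1
  have hshift : ((List.range (n - 1)).filter (fun t => !decide ((t + 1) ∈ P))).length
      = ((List.range' 1 (n - 1)).filter (fun t => !decide (t ∈ P))).length := by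
    have : List.range' 1 (n - 1) = (List.range (n - 1)).map (1 + ·) := by
      rw [List.range_eq_range', List.map_add_range']
    rw [this, List.filter_map, List.length_map]
    congr 1
    apply List.filter_congr
    intro t _
    simp only [Function.comp_apply, Nat.add_comm 1 t]
  have htot := List.length_eq_length_filter_add
    (l := List.range' 1 (n - 1)) (fun t => decide (t ∈ P))
  have hcnt : ((List.range' 1 (n - 1)).filter (fun t => decide (t ∈ P))).length
      = q.length - 1 := by
    have := scanl_count q 0 (q_pos n μ) hqne
    simp only [Nat.zero_add] at this
    rw [← hP] at this
    rw [← this]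
    congr 1
    rw [hqs]
  have hlen' : (List.range' 1 (n - 1)).length = n - 1 := List.length_range' ..
  have hnot : ((List.range' 1 (n - 1)).filter (fun t => !decide (t ∈ P))).length
      = (n - 1) - (q.length - 1) := by
    omega
  rw [hfin, hshift, hnot, ← hqlen]
  omega

theorem partition_filter_injective (n : ℕ) (μ ν : n.Partition)
    (h : μ.parts.filter (fun p => 2 ≤ p) = ν.parts.filter (fun p => 2 ≤ p)) : μ = ν := by
  classical
  have key : ∀ ρ : n.Partition, ρ.parts
      = ρ.parts.filter (fun p => 2 ≤ p)
        + Multiset.replicate (n - (ρ.parts.filter (fun p => 2 ≤ p)).sum) 1 := by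
    intro ρ
    have h1 : ρ.parts.filter (fun p => ¬ 2 ≤ p)
        = Multiset.replicate (Multiset.card (ρ.parts.filter (fun p => ¬ 2 ≤ p))) 1 := by
      rw [Multiset.eq_replicate_card]
      intro b hb
      rw [Multiset.mem_filter] at hb
      have := ρ.parts_pos hb.1
      omega
    have h2 : ρ.parts.filter (fun p => 2 ≤ p) + ρ.parts.filter (fun p => ¬ 2 ≤ p)
        = ρ.parts := Multiset.filter_add_not _ _
    have h3 : (ρ.parts.filter (fun p => 2 ≤ p)).sum
        + Multiset.card (ρ.parts.filter (fun p => ¬ 2 ≤ p)) = n := by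
      have hsum := congrArg Multiset.sum h2
      rw [Multiset.sum_add, ρ.parts_sum] at hsum
      have h4 : (ρ.parts.filter (fun p => ¬ 2 ≤ p)).sum
          = Multiset.card (ρ.parts.filter (fun p => ¬ 2 ≤ p)) := by
        conv_lhs => rw [h1]
        rw [Multiset.sum_replicate, smul_eq_mul, mul_one]
      omega
    calc ρ.parts = ρ.parts.filter (fun p => 2 ≤ p) + ρ.parts.filter (fun p => ¬ 2 ≤ p) := h2.symm
      _ = _ := by rw [h1]; congr 2; omega
  have : μ.parts = ν.parts := by rw [key μ, key ν, h]
  cases μ; cases ν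
  simpa using this


end ISSAux


open ISSAux in
/-- For `Sₙ` with Coxeter generating set `T = {(1,2), …, (n-1,n)}` and a partition `μ` of `n`
with `k` parts: every word of signature `α(μ)` multiplies to an element of `C^μ`; the number
of words of signature `α(μ)` is `(n-k)!`; and consequently, for any enumeration `μ₁, …, μ_r`
of all partitions of `n`, the signatures `α(μ₁), …, α(μ_r)` form an independent signature
sequence of `Sₙ` whose independent signature matrix (with respect to the ordering
`C^{μ₁}, …, C^{μ_r}` of the conjugacy classes) is `diag((n-k₁)!, …, (n-k_r)!)`. -/
theorem symmetricGroup_partition_ISS (n : ℕ) (hn : 1 ≤ n) (μ : n.Partition) :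
    (∀ w : List (Fin (n - 1)), (∀ k, w.count k = sigOfPartition n μ k) →
      (w.map (transposGen n)).prod ∈ cycleTypeClass n μ) ∧
    ({w : List (Fin (n - 1)) | ∀ k, w.count k = sigOfPartition n μ k}.ncard
      = Nat.factorial (n - Multiset.card μ.parts)) ∧
    (∀ (r : ℕ) (μs : Fin r → n.Partition), Function.Bijective μs →
      (∀ i j : Fin r,
        ({w : List (Fin (n - 1)) | (∀ k, w.count k = sigOfPartition n (μs i) k) ∧
            (w.map (transposGen n)).prod ∈ cycleTypeClass n (μs j)}.ncard
          = if i = j then Nat.factorial (n - Multiset.card (μs i).parts) else 0)) ∧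
      LinearIndependent ℚ (fun i : Fin r => fun j : Fin r =>
        (({w : List (Fin (n - 1)) | (∀ k, w.count k = sigOfPartition n (μs i) k) ∧
            (w.map (transposGen n)).prod ∈ cycleTypeClass n (μs j)}.ncard : ℚ)))) := by
  refine ⟨fun w hw => part1 n μ hn w hw, part2 n hn μ, ?_⟩
  intro r μs hbij
  have key : ∀ i j : Fin r,
      ({w : List (Fin (n - 1)) | (∀ k, w.count k = sigOfPartition n (μs i) k) ∧
          (w.map (transposGen n)).prod ∈ cycleTypeClass n (μs j)}.ncard
        = if i = j then Nat.factorial (n - Multiset.card (μs i).parts) else 0) := by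
    intro i j
    by_cases hij : i = j
    · subst hij
      rw [if_pos rfl]
      have hs : {w : List (Fin (n - 1)) | (∀ k, w.count k = sigOfPartition n (μs i) k) ∧
          (w.map (transposGen n)).prod ∈ cycleTypeClass n (μs i)}
          = {w : List (Fin (n - 1)) | ∀ k, w.count k = sigOfPartition n (μs i) k} := by
        ext w
        exact ⟨fun h => h.1, fun h => ⟨h, part1 n (μs i) hn w h⟩⟩
      rw [hs]
      exact part2 n hn (μs i)
    · rw [if_neg hij]
      have hs : {w : List (Fin (n - 1)) | (∀ k, w.count k = sigOfPartition n (μs i) k) ∧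
          (w.map (transposGen n)).prod ∈ cycleTypeClass n (μs j)} = ∅ := by
        ext w
        simp only [Set.mem_setOf_eq, Set.mem_empty_iff_false, iff_false]
        rintro ⟨h1, h2⟩
        have h3 := part1 n (μs i) hn w h1
        rw [cycleTypeClass, Set.mem_setOf_eq] at h2 h3
        exact hij (hbij.injective (partition_filter_injective n _ _ (h3.symm.trans h2)))
      rw [hs, Set.ncard_empty]
  refine ⟨key, ?_⟩
  rw [Fintype.linearIndependent_iff]
  intro g hg i
  have hi := congrFun hg i
  simp only [Finset.sum_apply, Pi.smul_apply, smul_eq_mul, Pi.zero_apply] at hi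
  have hval : ∀ j : Fin r,
      (({w : List (Fin (n - 1)) | (∀ k, w.count k = sigOfPartition n (μs j) k) ∧
          (w.map (transposGen n)).prod ∈ cycleTypeClass n (μs i)}.ncard : ℚ))
      = if j = i then (Nat.factorial (n - Multiset.card (μs j).parts) : ℚ) else 0 := by
    intro j
    rw [key j i]
    split_ifs <;> simp
  rw [Finset.sum_congr rfl (fun j _ => by rw [hval j])] at hi
  rw [Finset.sum_eq_single i (fun b _ hb => by rw [if_neg hb, mul_zero])
    (fun h => absurd (Finset.mem_univ i) h)] at hi
  rw [if_pos rfl] at hi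
  have hfac : ((Nat.factorial (n - Multiset.card (μs i).parts)) : ℚ) ≠ 0 := by
    exact_mod_cast Nat.factorial_ne_zero _
  exact (mul_eq_zero.1 hi).resolve_right hfac
end
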